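/- arXiv:1906.09521 — 6 statements merged into one kernel-verified Lean document; each statement's English description precedes it below -/
import Mathlib

section
/- Let d ≥ 1 be an integer, p ≥ 1 and 0 ≤ q < p real numbers, η : [0,∞) → [0,∞) measurable, and w ∈ ℝ^d. Then, as an identity in [0,∞] (with the convention that the integrand is 0 at ξ = 0), ∫_{ℝ^d} η(|ξ|) · |⟨w, ξ⟩|^p / |ξ|^q · dξ = ϑ_η(p,q) · |w|^p, where ϑ_η(p,q) := 2 ω_{d−1} · (Γ((p+1)/2) Γ((d+1)/2) / Γ((p+d)/2)) · ∫_0^∞ t^{p−q+d−1} η(t) dt. -/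
open MeasureTheory
open scoped RealInnerProductSpace ENNReal

/-- `ω_m = π^{m/2}/Γ(m/2+1)`, the Lebesgue volume of the unit ball in `ℝ^m`. -/
noncomputable def omegaVol (m : ℝ) : ℝ := Real.pi ^ (m / 2) / Real.Gamma (m / 2 + 1)

open Metric Set Real

lemma aux_polar (d : ℕ) (hd : 1 ≤ d) (g : ℝ → ℝ≥0∞) (hg : Measurable g)
    (h : EuclideanSpace ℝ (Fin d) → ℝ≥0∞) (hh : Measurable h)
    (F : EuclideanSpace ℝ (Fin d) → ℝ≥0∞) (hF : Measurable F)
    (hFh : ∀ u : EuclideanSpace ℝ (Fin d), ‖u‖ = 1 → ∀ r : ℝ, 0 < r → F (r • u) = g r * h u) :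
    ∫⁻ ξ, F ξ = (∫⁻ u : sphere (0 : EuclideanSpace ℝ (Fin d)) 1, h u
        ∂((volume : Measure (EuclideanSpace ℝ (Fin d))).toSphere)) *
      ∫⁻ t in Set.Ioi (0:ℝ), ENNReal.ofReal (t ^ (d - 1)) * g t := by
  haveI : Nontrivial (EuclideanSpace ℝ (Fin d)) := Module.nontrivial_of_finrank_pos (R := ℝ)
    (by rw [finrank_euclideanSpace_fin]; omega)
  have hdim : Module.finrank ℝ (EuclideanSpace ℝ (Fin d)) = d := finrank_euclideanSpace_fin
  have hmeas : Measurable fun y : sphere (0 : EuclideanSpace ℝ (Fin d)) 1 × Ioi (0:ℝ) =>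
      F (((homeomorphUnitSphereProd (EuclideanSpace ℝ (Fin d))).symm y : EuclideanSpace ℝ (Fin d))) :=
    hF.comp (measurable_subtype_coe.comp (Homeomorph.measurable _))
  have key := (Measure.measurePreserving_homeomorphUnitSphereProd
      (volume : Measure (EuclideanSpace ℝ (Fin d)))).lintegral_comp hmeas
  calc ∫⁻ ξ, F ξ = ∫⁻ ξ in ({0}ᶜ : Set (EuclideanSpace ℝ (Fin d))), F ξ := by
        rw [MeasureTheory.restrict_compl_singleton]
    _ = ∫⁻ x : ({0}ᶜ : Set (EuclideanSpace ℝ (Fin d))), F x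
          ∂((volume : Measure (EuclideanSpace ℝ (Fin d))).comap Subtype.val) := by
        rw [lintegral_subtype_comap (MeasurableSet.compl (measurableSet_singleton 0))]
    _ = ∫⁻ y : sphere (0 : EuclideanSpace ℝ (Fin d)) 1 × Ioi (0:ℝ),
          F (((homeomorphUnitSphereProd (EuclideanSpace ℝ (Fin d))).symm y : EuclideanSpace ℝ (Fin d)))
          ∂((volume : Measure (EuclideanSpace ℝ (Fin d))).toSphere.prod
            (.volumeIoiPow (Module.finrank ℝ (EuclideanSpace ℝ (Fin d)) - 1))) := by
        rw [← key]
        refine lintegral_congr fun x => ?_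
        rw [Homeomorph.symm_apply_apply]
    _ = ∫⁻ y : sphere (0 : EuclideanSpace ℝ (Fin d)) 1 × Ioi (0:ℝ), h y.1 * g y.2
          ∂((volume : Measure (EuclideanSpace ℝ (Fin d))).toSphere.prod
            (.volumeIoiPow (Module.finrank ℝ (EuclideanSpace ℝ (Fin d)) - 1))) := by
        refine lintegral_congr fun y => ?_
        rw [homeomorphUnitSphereProd_symm_apply_coe,
          hFh y.1 (mem_sphere_zero_iff_norm.1 y.1.2) y.2 y.2.2, mul_comm]
    _ = (∫⁻ u : sphere (0 : EuclideanSpace ℝ (Fin d)) 1, h u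
            ∂(volume : Measure (EuclideanSpace ℝ (Fin d))).toSphere) *
          ∫⁻ r : Ioi (0:ℝ), g r ∂(.volumeIoiPow (Module.finrank ℝ (EuclideanSpace ℝ (Fin d)) - 1)) :=
        lintegral_prod_mul ((hh.comp measurable_subtype_coe).aemeasurable)
          ((hg.comp measurable_subtype_coe).aemeasurable)
    _ = (∫⁻ u : sphere (0 : EuclideanSpace ℝ (Fin d)) 1, h u
            ∂(volume : Measure (EuclideanSpace ℝ (Fin d))).toSphere) *
          ∫⁻ t in Set.Ioi (0:ℝ), ENNReal.ofReal (t ^ (d - 1)) * g t := by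
        congr 1
        have hgc : Measurable fun r : Ioi (0:ℝ) => g r.1 := hg.comp measurable_subtype_coe
        rw [hdim, Measure.volumeIoiPow, lintegral_withDensity_eq_lintegral_mul _
          ((measurable_subtype_coe.pow_const _).ennreal_ofReal) hgc]
        exact lintegral_subtype_comap measurableSet_Ioi
          (fun t : ℝ => ENNReal.ofReal (t ^ (d-1)) * g t)

lemma aux_int_abs {f : ℝ → ℝ} (hf : IntegrableOn f (Ioi 0)) :
    Integrable fun x => f |x| := by
  have hf' : IntegrableOn (fun x => f |x|) (Ioi 0) :=
    hf.congr_fun (fun x hx => by rw [abs_of_pos hx]) measurableSet_Ioi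
  have int_Iic : IntegrableOn (fun x ↦ f |x|) (Iic 0) := by
    rw [← Measure.map_neg_eq_self (volume : Measure ℝ)]
    have m : MeasurableEmbedding fun x : ℝ => -x := (Homeomorph.neg ℝ).measurableEmbedding
    rw [m.integrableOn_map_iff]
    simp_rw [Function.comp_def, abs_neg, neg_preimage, neg_Iic, neg_zero]
    exact (integrableOn_Ici_iff_integrableOn_Ioi).mpr hf'
  have := int_Iic.union hf'
  rwa [Iic_union_Ioi, integrableOn_univ] at this

lemma aux_g1 (p : ℝ) (hp : -1 < p) :
    IntegrableOn (fun t : ℝ => Real.exp (-t^2) * t ^ p) (Ioi 0) := by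
  have h := integrableOn_rpow_mul_exp_neg_rpow (p := 2) (s := p) hp two_pos
  refine h.congr_fun (fun x _ => ?_) measurableSet_Ioi
  rw [mul_comm]
  congr 2
  rw [show ((2:ℝ)) = ((2:ℕ):ℝ) by norm_num]; beta_reduce; rw [Real.rpow_natCast]

lemma aux_g1_val (p : ℝ) (hp : -1 < p) :
    ∫ t in Ioi (0:ℝ), Real.exp (-t^2) * t ^ p = (1/2) * Real.Gamma ((p+1)/2) := by
  rw [show (∫ t in Ioi (0:ℝ), Real.exp (-t^2) * t ^ p)
      = ∫ t in Ioi (0:ℝ), t ^ p * Real.exp (-t ^ (2:ℝ)) from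
    setIntegral_congr_fun measurableSet_Ioi fun x _ => by
      rw [mul_comm]; congr 2; rw [show ((2:ℝ)) = ((2:ℕ):ℝ) by norm_num, Real.rpow_natCast]]
  rw [integral_rpow_mul_exp_neg_rpow two_pos hp]

lemma aux_Ip_int (p : ℝ) (hp : -1 < p) :
    Integrable fun t : ℝ => Real.exp (-t^2) * |t| ^ p := by
  have h := aux_int_abs (aux_g1 p hp)
  have : (fun x : ℝ => (fun t : ℝ => Real.exp (-t^2) * t ^ p) |x|)
      = fun t : ℝ => Real.exp (-t^2) * |t| ^ p := funext fun t => by simp only [sq_abs]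
  rwa [this] at h

lemma aux_Ip_val (p : ℝ) (hp : -1 < p) :
    ∫ t : ℝ, Real.exp (-t^2) * |t| ^ p = Real.Gamma ((p+1)/2) := by
  have h := integral_comp_abs (f := fun t : ℝ => Real.exp (-t^2) * t ^ p)
  have e : (fun x : ℝ => (fun t : ℝ => Real.exp (-t^2) * t ^ p) |x|)
      = fun t : ℝ => Real.exp (-t^2) * |t| ^ p := funext fun t => by simp only [sq_abs]
  rw [e] at h
  rw [h, aux_g1_val p hp]
  ring

lemma aux_gauss_int : Integrable fun t : ℝ => Real.exp (-t^2) := by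
  simpa using integrable_exp_neg_mul_sq (b := (1:ℝ)) one_pos

lemma aux_gauss_val : ∫ t : ℝ, Real.exp (-t^2) = Real.sqrt Real.pi := by
  have := integral_gaussian (1:ℝ)
  simpa using this

lemma aux_gauss_pi (d : ℕ) (hd : 1 ≤ d) (p : ℝ) (hp : 1 ≤ p) (i₀ : Fin d) :
    ∫⁻ y : Fin d → ℝ, ENNReal.ofReal (Real.exp (-∑ i, (y i)^2) * |y i₀| ^ p) =
      ENNReal.ofReal (Real.pi ^ (((d:ℝ) - 1)/2) * Real.Gamma ((p+1)/2)) := by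
  have hp' : (-1:ℝ) < p := by linarith
  set f : Fin d → ℝ → ℝ := fun i t => Real.exp (-t^2) * (if i = i₀ then |t| ^ p else 1) with hf
  have hfi : ∀ i, Integrable (f i) := by
    intro i
    by_cases hi : i = i₀
    · simpa [hf, hi] using aux_Ip_int p hp'
    · simpa [hf, hi] using aux_gauss_int
  have hfnn : ∀ i t, 0 ≤ f i t := by
    intro i t
    refine mul_nonneg (Real.exp_nonneg _) ?_
    split
    · exact Real.rpow_nonneg (abs_nonneg _) _
    · norm_num
  have hprod : ∀ y : Fin d → ℝ, Real.exp (-∑ i, (y i)^2) * |y i₀| ^ p = ∏ i, f i (y i) := by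
    intro y
    rw [hf]
    rw [Finset.prod_mul_distrib, ← Real.exp_sum]
    simp only [Finset.prod_ite_eq', Finset.mem_univ, if_true]
    rw [← Finset.sum_neg_distrib]
  have key : ∫⁻ y : Fin d → ℝ, ENNReal.ofReal (Real.exp (-∑ i, (y i)^2) * |y i₀| ^ p)
      = ENNReal.ofReal (∫ y : Fin d → ℝ, ∏ i, f i (y i)) := by
    have hI : Integrable (fun y : Fin d → ℝ => ∏ i, f i (y i)) := Integrable.fintype_prod hfi
    rw [ofReal_integral_eq_lintegral_ofReal hI
      (ae_of_all _ fun y => Finset.prod_nonneg fun i _ => hfnn i (y i))]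
    exact lintegral_congr fun y => by rw [hprod y]
  rw [key, MeasureTheory.volume_pi, MeasureTheory.integral_fintype_prod_eq_prod]
  congr 1
  have hval : ∀ i, ∫ t : ℝ, f i t = if i = i₀ then Real.Gamma ((p+1)/2) else Real.sqrt Real.pi := by
    intro i
    by_cases hi : i = i₀
    · simp only [hf, hi, if_true]
      exact aux_Ip_val p hp'
    · simp only [hf, hi, if_false]
      simpa using aux_gauss_val
  calc (∏ i, ∫ t : ℝ, f i t) = ∏ i, (if i = i₀ then Real.Gamma ((p+1)/2) else Real.sqrt Real.pi) :=
        Finset.prod_congr rfl fun i _ => hval i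
    _ = Real.Gamma ((p+1)/2) * Real.sqrt Real.pi ^ (d - 1) := by
        rw [Fintype.prod_eq_mul_prod_compl i₀]
        simp only [if_true]
        congr 1
        rw [Finset.prod_congr rfl (fun i hi => by
          rw [if_neg (by simpa [Finset.mem_compl, Finset.mem_singleton] using hi)]),
          Finset.prod_const, Finset.card_compl, Finset.card_singleton, Fintype.card_fin]
    _ = Real.pi ^ (((d:ℝ) - 1)/2) * Real.Gamma ((p+1)/2) := by
        rw [mul_comm]
        congr 1
        rw [Real.sqrt_eq_rpow, ← Real.rpow_natCast (Real.pi ^ ((1:ℝ)/2)) (d-1),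
          ← Real.rpow_mul Real.pi_nonneg]
        congr 1
        rw [Nat.cast_sub hd]
        push_cast
        ring
lemma aux_sphere (d : ℕ) (hd : 1 ≤ d) (p : ℝ) (hp : 1 ≤ p)
    (e : EuclideanSpace ℝ (Fin d)) (he : ‖e‖ = 1) :
    ∫⁻ u : sphere (0 : EuclideanSpace ℝ (Fin d)) 1,
        ENNReal.ofReal (|⟪e, (u : EuclideanSpace ℝ (Fin d))⟫| ^ p)
        ∂((volume : Measure (EuclideanSpace ℝ (Fin d))).toSphere) =
      ENNReal.ofReal (2 * Real.pi ^ (((d:ℝ) - 1)/2) * Real.Gamma ((p+1)/2) /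
        Real.Gamma ((p + d)/2)) := by
  have hp0 : (0:ℝ) < p := by linarith
  set h : EuclideanSpace ℝ (Fin d) → ℝ≥0∞ :=
    fun ξ => ENNReal.ofReal (|⟪e, ξ⟫| ^ p) with hh_def
  set F : EuclideanSpace ℝ (Fin d) → ℝ≥0∞ :=
    fun ξ => ENNReal.ofReal (Real.exp (-‖ξ‖^2) * |⟪e, ξ⟫| ^ p) with hF_def
  set g : ℝ → ℝ≥0∞ := fun r => ENNReal.ofReal (Real.exp (-r^2) * r ^ p) with hg_def
  have hinner : Measurable fun ξ : EuclideanSpace ℝ (Fin d) => ⟪e, ξ⟫ :=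
    (continuous_const.inner continuous_id).measurable
  have hh : Measurable h := by fun_prop
  have hF : Measurable F := by fun_prop
  have hg : Measurable g := by fun_prop
  have hFh : ∀ u : EuclideanSpace ℝ (Fin d), ‖u‖ = 1 → ∀ r : ℝ, 0 < r →
      F (r • u) = g r * h u := by
    intro u hu r hr
    have hnorm : ‖r • u‖ = r := by
      rw [norm_smul, hu, mul_one, Real.norm_eq_abs, abs_of_pos hr]
    have hinn : ⟪e, r • u⟫ = r * ⟪e, u⟫ := real_inner_smul_right e u r
    rw [hF_def, hg_def, hh_def]
    simp only [hnorm, hinn]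
    rw [abs_mul, abs_of_pos hr, Real.mul_rpow hr.le (abs_nonneg _), ← mul_assoc,
      ← ENNReal.ofReal_mul (by positivity)]
  have key := aux_polar d hd g hg h hh F hF hFh
  -- compute the Gaussian integral (left side of key)
  have i₀ : Fin d := ⟨0, hd⟩
  have horth : Orthonormal ℝ (({i₀} : Set (Fin d)).restrict (fun _ : Fin d => e)) := by
    constructor
    · intro i; exact he
    · intro i j hij
      exact absurd (Subtype.ext ((Set.mem_singleton_iff.1 i.2).trans
        (Set.mem_singleton_iff.1 j.2).symm)) hij
  obtain ⟨b, hb⟩ := horth.exists_orthonormalBasis_extension_of_card_eq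
    (by simp [finrank_euclideanSpace_fin])
  have hbe : b i₀ = e := hb i₀ (Set.mem_singleton _)
  have hΦ : Measurable fun x : EuclideanSpace ℝ (Fin d) =>
      ENNReal.ofReal (Real.exp (-‖x‖^2) * |x i₀| ^ p) := by
    have : Measurable fun x : EuclideanSpace ℝ (Fin d) => x i₀ :=
      (EuclideanSpace.proj i₀ : EuclideanSpace ℝ (Fin d) →L[ℝ] ℝ).continuous.measurable
    fun_prop
  have hG : ∫⁻ ξ, F ξ =
      ENNReal.ofReal (Real.pi ^ (((d:ℝ) - 1)/2) * Real.Gamma ((p+1)/2)) := by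
    have step1 : ∫⁻ ξ, F ξ = ∫⁻ x : EuclideanSpace ℝ (Fin d),
        ENNReal.ofReal (Real.exp (-‖x‖^2) * |x i₀| ^ p) := by
      rw [← b.measurePreserving_repr.lintegral_comp hΦ]
      refine lintegral_congr fun ξ => ?_
      simp only [hF_def, OrthonormalBasis.repr_apply_apply, hbe, LinearIsometryEquiv.norm_map]
    have step2 : ∫⁻ x : EuclideanSpace ℝ (Fin d),
        ENNReal.ofReal (Real.exp (-‖x‖^2) * |x i₀| ^ p) =
        ∫⁻ y : Fin d → ℝ, ENNReal.ofReal (Real.exp (-∑ i, (y i)^2) * |y i₀| ^ p) := by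
      have mp := MeasurePreserving.symm _ (EuclideanSpace.volume_preserving_symm_measurableEquiv_toLp (Fin d))
      rw [← mp.lintegral_comp hΦ]
      refine lintegral_congr fun y => ?_
      have hnorm : ‖(MeasurableEquiv.toLp 2 (Fin d → ℝ)).symm.symm y‖^2 = ∑ i, (y i)^2 := by
        rw [EuclideanSpace.norm_eq, Real.sq_sqrt (Finset.sum_nonneg fun i _ => sq_nonneg _)]
        exact Finset.sum_congr rfl fun i _ => by rw [Real.norm_eq_abs, sq_abs]; rfl
      simp only [hnorm]
      rfl
    rw [step1, step2, aux_gauss_pi d hd p hp i₀]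
  -- compute the radial integral (right side of key)
  have hR : (∫⁻ t in Set.Ioi (0:ℝ), ENNReal.ofReal (t ^ (d - 1)) * g t) =
      ENNReal.ofReal ((1/2) * Real.Gamma ((p + d)/2)) := by
    have hcongr : ∫⁻ t in Set.Ioi (0:ℝ), ENNReal.ofReal (t ^ (d - 1)) * g t =
        ∫⁻ t in Set.Ioi (0:ℝ), ENNReal.ofReal (t ^ (p + d - 1) * Real.exp (-t ^ (2:ℝ))) := by
      refine setLIntegral_congr_fun measurableSet_Ioi (fun t ht => ?_)
      rw [hg_def, ← ENNReal.ofReal_mul (pow_nonneg (le_of_lt (Set.mem_Ioi.1 ht)) _)]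
      congr 1
      rw [show t ^ (d-1) = t ^ (((d-1:ℕ)):ℝ) from (Real.rpow_natCast t (d-1)).symm,
        show t ^ ((2:ℝ)) = t ^ (2:ℕ) by rw [show ((2:ℝ)) = ((2:ℕ):ℝ) by norm_num,
          Real.rpow_natCast]]
      rw [Nat.cast_sub hd, Nat.cast_one]
      rw [show t ^ (p + (d:ℝ) - 1) = t ^ ((d:ℝ) - 1) * t ^ p by
        rw [← Real.rpow_add ht]; ring_nf]
      ring
    rw [hcongr, ← ofReal_integral_eq_lintegral_ofReal
      (integrableOn_rpow_mul_exp_neg_rpow (by linarith) two_pos)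
      (by filter_upwards [ae_restrict_mem measurableSet_Ioi] with t ht
          exact mul_nonneg (Real.rpow_nonneg (le_of_lt ht) _) (Real.exp_nonneg _))]
    rw [integral_rpow_mul_exp_neg_rpow two_pos (by linarith)]
    congr 2
    ring
  -- solve for the sphere integral
  have hΓpos : (0:ℝ) < (1/2) * Real.Gamma ((p + d)/2) := by
    have : (0:ℝ) < (p + d)/2 := by positivity
    have := Real.Gamma_pos_of_pos this
    linarith
  rw [hG, hR] at key
  have hne0 : ENNReal.ofReal ((1/2) * Real.Gamma ((p + d)/2)) ≠ 0 := by
    simp only [ne_eq, ENNReal.ofReal_eq_zero, not_le]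
    exact hΓpos
  have hAR : ENNReal.ofReal ((1/2) * Real.Gamma ((p + d)/2)) *
      (∫⁻ u : sphere (0 : EuclideanSpace ℝ (Fin d)) 1, h u
        ∂((volume : Measure (EuclideanSpace ℝ (Fin d))).toSphere)) =
      ENNReal.ofReal (Real.pi ^ (((d:ℝ) - 1)/2) * Real.Gamma ((p+1)/2)) := by
    rw [mul_comm]; exact key.symm
  have hA := (ENNReal.eq_div_iff hne0 ENNReal.ofReal_ne_top).2 hAR
  rw [hA, ← ENNReal.ofReal_div_of_pos hΓpos]
  congr 1
  rw [eq_div_iff (by linarith)]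
  field_simp

/-- For `p ≥ 1`, `0 ≤ q < p`, a measurable kernel `η : [0,∞) → [0,∞)` and `w ∈ ℝ^d`, as an
identity in `[0,∞]` (the integrand vanishes at `ξ = 0` by the division-by-zero convention):
`∫_{ℝ^d} η(|ξ|) |⟨w,ξ⟩|^p / |ξ|^q dξ = ϑ_η(p,q) |w|^p`, where
`ϑ_η(p,q) = 2 ω_{d-1} (Γ((p+1)/2)Γ((d+1)/2)/Γ((p+d)/2)) ∫_0^∞ t^{p-q+d-1} η(t) dt`. -/
theorem lintegral_kernel_abs_inner_rpow (d : ℕ) (hd : 1 ≤ d) (p q : ℝ) (hp : 1 ≤ p)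
    (hq0 : 0 ≤ q) (hqp : q < p) (η : ℝ → ℝ) (hη : Measurable η)
    (hηnn : ∀ t, 0 ≤ t → 0 ≤ η t) (w : EuclideanSpace ℝ (Fin d)) :
    ∫⁻ ξ, ENNReal.ofReal (η ‖ξ‖ * (|⟪w, ξ⟫| ^ p / ‖ξ‖ ^ q)) =
      (ENNReal.ofReal
          (2 * omegaVol ((d : ℝ) - 1) *
            (Real.Gamma ((p + 1) / 2) * Real.Gamma (((d : ℝ) + 1) / 2) /
              Real.Gamma ((p + (d : ℝ)) / 2))) *
        ∫⁻ t in Set.Ioi (0 : ℝ), ENNReal.ofReal (t ^ (p - q + (d : ℝ) - 1) * η t)) *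
      ENNReal.ofReal (‖w‖ ^ p) := by
  have hp0 : (0:ℝ) < p := by linarith
  by_cases hw : w = 0
  · subst hw
    have h0 : ∀ ξ : EuclideanSpace ℝ (Fin d),
        ENNReal.ofReal (η ‖ξ‖ * (|⟪(0 : EuclideanSpace ℝ (Fin d)), ξ⟫| ^ p / ‖ξ‖ ^ q)) = 0 := by
      intro ξ
      rw [inner_zero_left, abs_zero, Real.zero_rpow (ne_of_gt hp0), zero_div, mul_zero,
        ENNReal.ofReal_zero]
    rw [lintegral_congr h0, lintegral_zero, norm_zero, Real.zero_rpow (ne_of_gt hp0),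
      ENNReal.ofReal_zero, mul_zero]
  · set e : EuclideanSpace ℝ (Fin d) := ‖w‖⁻¹ • w with he_def
    have hwnorm : (0:ℝ) < ‖w‖ := norm_pos_iff.2 hw
    have he : ‖e‖ = 1 := by
      rw [he_def, norm_smul, norm_inv, norm_norm, inv_mul_cancel₀ (ne_of_gt hwnorm)]
    have hinner : ∀ ξ : EuclideanSpace ℝ (Fin d), ⟪w, ξ⟫ = ‖w‖ * ⟪e, ξ⟫ := by
      intro ξ
      rw [he_def, real_inner_smul_left, ← mul_assoc, mul_inv_cancel₀ (ne_of_gt hwnorm), one_mul]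
    have hinner_meas : Measurable fun ξ : EuclideanSpace ℝ (Fin d) => ⟪e, ξ⟫ :=
      (continuous_const.inner continuous_id).measurable
    set F : EuclideanSpace ℝ (Fin d) → ℝ≥0∞ :=
      fun ξ => ENNReal.ofReal (η ‖ξ‖ * (|⟪e, ξ⟫| ^ p / ‖ξ‖ ^ q)) with hF_def
    have hF : Measurable F := by fun_prop
    set g : ℝ → ℝ≥0∞ := fun r => ENNReal.ofReal (η r * r ^ (p - q)) with hg_def
    have hg : Measurable g := by fun_prop
    set h : EuclideanSpace ℝ (Fin d) → ℝ≥0∞ :=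
      fun ξ => ENNReal.ofReal (|⟪e, ξ⟫| ^ p) with hh_def
    have hh : Measurable h := by fun_prop
    have hFh : ∀ u : EuclideanSpace ℝ (Fin d), ‖u‖ = 1 → ∀ r : ℝ, 0 < r →
        F (r • u) = g r * h u := by
      intro u hu r hr
      have hnorm : ‖r • u‖ = r := by
        rw [norm_smul, hu, mul_one, Real.norm_eq_abs, abs_of_pos hr]
      rw [hF_def, hg_def, hh_def]
      simp only [hnorm, real_inner_smul_right]
      rw [abs_mul, abs_of_pos hr, Real.mul_rpow hr.le (abs_nonneg _),
        show η r * (r ^ p * |⟪e, u⟫| ^ p / r ^ q) = (η r * r ^ (p - q)) * |⟪e, u⟫| ^ p by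
          rw [Real.rpow_sub hr]; ring,
        ENNReal.ofReal_mul (mul_nonneg (hηnn r hr.le) (Real.rpow_nonneg hr.le _))]
    have split : ∀ ξ : EuclideanSpace ℝ (Fin d),
        ENNReal.ofReal (η ‖ξ‖ * (|⟪w, ξ⟫| ^ p / ‖ξ‖ ^ q)) =
          ENNReal.ofReal (‖w‖ ^ p) * F ξ := by
      intro ξ
      rw [hF_def]
      simp only [hinner ξ]
      rw [abs_mul, abs_of_pos hwnorm, Real.mul_rpow hwnorm.le (abs_nonneg _),
        show η ‖ξ‖ * (‖w‖ ^ p * |⟪e, ξ⟫| ^ p / ‖ξ‖ ^ q)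
          = ‖w‖ ^ p * (η ‖ξ‖ * (|⟪e, ξ⟫| ^ p / ‖ξ‖ ^ q)) by ring,
        ENNReal.ofReal_mul (Real.rpow_nonneg hwnorm.le _)]
    have hrad : (∫⁻ t in Set.Ioi (0:ℝ), ENNReal.ofReal (t ^ (d - 1)) * g t)
        = ∫⁻ t in Set.Ioi (0:ℝ), ENNReal.ofReal (t ^ (p - q + (d:ℝ) - 1) * η t) := by
      refine setLIntegral_congr_fun measurableSet_Ioi (fun t ht => ?_)
      have ht' : (0:ℝ) < t := ht
      rw [hg_def, ← ENNReal.ofReal_mul (pow_nonneg ht'.le _)]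
      congr 1
      rw [show t ^ (d-1) = t ^ ((d:ℝ)-1) by
          rw [← Real.rpow_natCast t (d-1), Nat.cast_sub hd, Nat.cast_one],
        show t ^ ((d:ℝ)-1) * (η t * t ^ (p-q)) = (t ^ ((d:ℝ)-1) * t ^ (p-q)) * η t by ring,
        ← Real.rpow_add ht']
      congr 2
      ring
    have hconst : ENNReal.ofReal
          (2 * omegaVol ((d : ℝ) - 1) *
            (Real.Gamma ((p + 1) / 2) * Real.Gamma (((d : ℝ) + 1) / 2) /
              Real.Gamma ((p + (d : ℝ)) / 2)))
        = ENNReal.ofReal (2 * Real.pi ^ (((d:ℝ) - 1)/2) * Real.Gamma ((p+1)/2) /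
            Real.Gamma ((p + d)/2)) := by
      congr 1
      rw [omegaVol, show ((d:ℝ) - 1)/2 + 1 = ((d:ℝ) + 1)/2 by ring]
      have h1 : Real.Gamma (((d:ℝ) + 1)/2) ≠ 0 :=
        ne_of_gt (Real.Gamma_pos_of_pos (by positivity))
      field_simp
    calc ∫⁻ ξ, ENNReal.ofReal (η ‖ξ‖ * (|⟪w, ξ⟫| ^ p / ‖ξ‖ ^ q))
        = ∫⁻ ξ, ENNReal.ofReal (‖w‖ ^ p) * F ξ := lintegral_congr split
      _ = ENNReal.ofReal (‖w‖ ^ p) * ∫⁻ ξ, F ξ := lintegral_const_mul _ hF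
      _ = ENNReal.ofReal (‖w‖ ^ p) *
          ((∫⁻ u : sphere (0 : EuclideanSpace ℝ (Fin d)) 1, h u
            ∂((volume : Measure (EuclideanSpace ℝ (Fin d))).toSphere)) *
           ∫⁻ t in Set.Ioi (0:ℝ), ENNReal.ofReal (t ^ (d - 1)) * g t) := by
          rw [aux_polar d hd g hg h hh F hF hFh]
      _ = ENNReal.ofReal (‖w‖ ^ p) *
          (ENNReal.ofReal (2 * Real.pi ^ (((d:ℝ) - 1)/2) * Real.Gamma ((p+1)/2) /
            Real.Gamma ((p + d)/2)) *
           ∫⁻ t in Set.Ioi (0:ℝ), ENNReal.ofReal (t ^ (p - q + (d:ℝ) - 1) * η t)) := by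
          rw [← hrad, hh_def, aux_sphere d hd p hp e he]
      _ = _ := by rw [hconst]; ring
end

section
/- Let Ω ⊂ ℝ^d be a bounded measurable set, and let ρ : Ω → ℝ be Lipschitz with Lipschitz constant L and satisfy ρ(x) ≥ c > 0 for all x ∈ Ω. Let p ≥ 1, 0 ≤ q < p, ε > 0, ℓ ≥ 0, and M > 0. Let ζ : [0,∞) → [0,∞) and η : [0,∞) → [0,∞) be measurable, with η(s) = 0 for all s > M. Let T : Ω → Ω be measurable with |T(x) − x| ≤ ℓ for all x ∈ Ω, and let u : Ω → ℝ be such that u ∘ T is measurable. Define (with the convention that division by zero gives zero, and η_ε(s) := ε^{−d} η(s/ε)): GAMS(u) := ε^{−1} ∫_{Ω×Ω} ζ( |u(T(x)) − u(T(y))|^p / (ε^{p−q−1} |T(x) − T(y)|^q) ) η_ε(|T(x) − T(y)|) ρ(x)² dx dy, and R(u) := ε^{−1} ∫_{Ω×Ω} ζ( |u(T(x)) − u(T(y))|^p / (ε^{p−q−1} |T(x) − T(y)|^q) ) η_ε(|T(x) − T(y)|) (ρ(y) − ρ(x)) ρ(x) dx dy. Then |R(u)| ≤ (L(Mε + 2ℓ)/c)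 · GAMS(u). -/
open MeasureTheory
open scoped ENNReal NNReal

/-- Quantitative comparison of the remainder `R(u)` (with weight `(ρ(y)-ρ(x))ρ(x)`) with the
auxiliary energy `GAMS(u)` (with weight `ρ(x)²`): if `ρ` is `L`-Lipschitz on `Ω` with `ρ ≥ c > 0`,
`η` vanishes on `(M,∞)` and `|T(x) - x| ≤ ℓ` on `Ω`, then
`|R(u)| ≤ (L(Mε + 2ℓ)/c) · GAMS(u)`. -/
theorem remainder_le_GAMS (d : ℕ) (Ω : Set (EuclideanSpace ℝ (Fin d)))
    (hΩm : MeasurableSet Ω) (hΩb : Bornology.IsBounded Ω)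
    (ρ : EuclideanSpace ℝ (Fin d) → ℝ) (L : ℝ≥0) (hρL : LipschitzOnWith L ρ Ω)
    (c : ℝ) (hc : 0 < c) (hρc : ∀ x ∈ Ω, c ≤ ρ x)
    (p q ε ℓ M : ℝ) (hp : 1 ≤ p) (hq0 : 0 ≤ q) (hqp : q < p)
    (hε : 0 < ε) (hℓ : 0 ≤ ℓ) (hM : 0 < M)
    (ζ η : ℝ → ℝ) (hζm : Measurable ζ) (hηm : Measurable η)
    (hζnn : ∀ t, 0 ≤ ζ t) (hηnn : ∀ t, 0 ≤ η t)
    (hηM : ∀ t, M < t → η t = 0)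
    (T : EuclideanSpace ℝ (Fin d) → EuclideanSpace ℝ (Fin d)) (hTm : Measurable T)
    (hTmap : ∀ x ∈ Ω, T x ∈ Ω) (hTℓ : ∀ x ∈ Ω, ‖T x - x‖ ≤ ℓ)
    (u : EuclideanSpace ℝ (Fin d) → ℝ) (hu : Measurable fun x => u (T x)) :
    ENNReal.ofReal
        |ε⁻¹ *
          ∫ pr in Ω ×ˢ Ω,
            ζ (|u (T pr.1) - u (T pr.2)| ^ p / (ε ^ (p - q - 1) * ‖T pr.1 - T pr.2‖ ^ q)) *
              (ε ^ (-(d : ℝ)) * η (‖T pr.1 - T pr.2‖ / ε)) * ((ρ pr.2 - ρ pr.1) * ρ pr.1)| ≤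
      ENNReal.ofReal ((L * (M * ε + 2 * ℓ)) / c) *
        (ENNReal.ofReal ε⁻¹ *
          ∫⁻ pr in Ω ×ˢ Ω,
            ENNReal.ofReal
              (ζ (|u (T pr.1) - u (T pr.2)| ^ p / (ε ^ (p - q - 1) * ‖T pr.1 - T pr.2‖ ^ q)) *
                (ε ^ (-(d : ℝ)) * η (‖T pr.1 - T pr.2‖ / ε)) * ρ pr.1 ^ 2)) := by
  set K : ℝ := (L : ℝ) * (M * ε + 2 * ℓ) with hKdef
  have hKnn : 0 ≤ K := by positivity
  have hKc : 0 ≤ K / c := div_nonneg hKnn hc.le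
  set f : EuclideanSpace ℝ (Fin d) × EuclideanSpace ℝ (Fin d) → ℝ := fun pr =>
    ζ (|u (T pr.1) - u (T pr.2)| ^ p / (ε ^ (p - q - 1) * ‖T pr.1 - T pr.2‖ ^ q)) *
      (ε ^ (-(d : ℝ)) * η (‖T pr.1 - T pr.2‖ / ε)) with hfdef
  have hfnn : ∀ pr, 0 ≤ f pr := fun pr =>
    mul_nonneg (hζnn _) (mul_nonneg (Real.rpow_pos_of_pos hε _).le (hηnn _))
  -- pointwise bound
  have key : ∀ pr ∈ Ω ×ˢ Ω,
      ENNReal.ofReal |f pr * ((ρ pr.2 - ρ pr.1) * ρ pr.1)| ≤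
      ENNReal.ofReal (K / c) * ENNReal.ofReal (f pr * ρ pr.1 ^ 2) := by
    rintro ⟨x, y⟩ hpr
    obtain ⟨hx, hy⟩ := Set.mem_prod.mp hpr
    rw [← ENNReal.ofReal_mul hKc]
    apply ENNReal.ofReal_le_ofReal
    by_cases hη : η (‖T x - T y‖ / ε) = 0
    · have : f (x, y) = 0 := by simp [hfdef, hη]
      simp [this]
    · have hρ1 : 0 ≤ ρ x := hc.le.trans (hρc x hx)
      have hTd : ‖T x - T y‖ ≤ M * ε := by
        by_contra h
        push_neg at h
        exact hη (hηM _ ((lt_div_iff₀ hε).mpr (by linarith)))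
      have hxy : ‖y - x‖ ≤ M * ε + 2 * ℓ := by
        have h1 := hTℓ x hx
        have h2 := hTℓ y hy
        have heq : y - x = (T x - x) - (T x - T y) - (T y - y) := by abel
        calc ‖y - x‖ = ‖(T x - x) - (T x - T y) - (T y - y)‖ := by rw [heq]
          _ ≤ ‖(T x - x) - (T x - T y)‖ + ‖T y - y‖ := norm_sub_le _ _
          _ ≤ ‖T x - x‖ + ‖T x - T y‖ + ‖T y - y‖ := by
              have := norm_sub_le (T x - x) (T x - T y); linarith
          _ ≤ M * ε + 2 * ℓ := by linarith
      have hΔ : |ρ y - ρ x| ≤ K := by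
        have := hρL.dist_le_mul y hy x hx
        rw [Real.dist_eq] at this
        refine this.trans ?_
        rw [hKdef]
        have hd : dist y x = ‖y - x‖ := by rw [dist_eq_norm]
        have : (L : ℝ) * dist y x ≤ (L : ℝ) * (M * ε + 2 * ℓ) := by
          apply mul_le_mul_of_nonneg_left _ L.coe_nonneg
          rw [hd]; exact hxy
        exact this
      have hΔ2 : |ρ y - ρ x| ≤ K / c * ρ x := by
        refine hΔ.trans ?_
        calc K = K / c * c := (div_mul_cancel₀ K hc.ne').symm
          _ ≤ K / c * ρ x := mul_le_mul_of_nonneg_left (hρc x hx) hKc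
      calc |f (x, y) * ((ρ y - ρ x) * ρ x)|
          = f (x, y) * (|ρ y - ρ x| * ρ x) := by
            rw [abs_mul, abs_of_nonneg (hfnn (x, y)), abs_mul, abs_of_nonneg hρ1]
        _ ≤ f (x, y) * (K / c * ρ x * ρ x) :=
            mul_le_mul_of_nonneg_left
              (mul_le_mul_of_nonneg_right hΔ2 hρ1) (hfnn _)
        _ = K / c * (f (x, y) * ρ x ^ 2) := by ring
  -- main chain
  have habs : |ε⁻¹ * ∫ pr in Ω ×ˢ Ω, f pr * ((ρ pr.2 - ρ pr.1) * ρ pr.1)| =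
      ε⁻¹ * |∫ pr in Ω ×ˢ Ω, f pr * ((ρ pr.2 - ρ pr.1) * ρ pr.1)| := by
    rw [abs_mul, abs_of_nonneg (inv_nonneg.mpr hε.le)]
  rw [habs, ENNReal.ofReal_mul (inv_nonneg.mpr hε.le), ← mul_assoc,
    mul_comm (ENNReal.ofReal (K / c)) (ENNReal.ofReal ε⁻¹), mul_assoc]
  refine mul_le_mul_right ?_ _
  calc ENNReal.ofReal |∫ pr in Ω ×ˢ Ω, f pr * ((ρ pr.2 - ρ pr.1) * ρ pr.1)|
      ≤ ∫⁻ pr in Ω ×ˢ Ω, ENNReal.ofReal |f pr * ((ρ pr.2 - ρ pr.1) * ρ pr.1)| := by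
        rw [← Real.norm_eq_abs, ofReal_norm]
        refine (enorm_integral_le_lintegral_enorm _).trans ?_
        refine lintegral_mono fun pr => ?_
        rw [← ofReal_norm, Real.norm_eq_abs]
    _ ≤ ∫⁻ pr in Ω ×ˢ Ω, ENNReal.ofReal (K / c) * ENNReal.ofReal (f pr * ρ pr.1 ^ 2) :=
        setLIntegral_mono' (hΩm.prod hΩm) key
    _ = ENNReal.ofReal (K / c) * ∫⁻ pr in Ω ×ˢ Ω, ENNReal.ofReal (f pr * ρ pr.1 ^ 2) :=
        lintegral_const_mul' _ _ ENNReal.ofReal_ne_top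
end

section
/- Let Ω ⊂ ℝ^d be a bounded measurable set and ρ : Ω → ℝ Lipschitz with 0 < c ≤ ρ(x) ≤ C < ∞ for all x ∈ Ω. Let p ≥ 1 and 0 ≤ q < p. Let ζ : [0,∞) → [0,∞) be concave, nondecreasing, with ζ(0) = 0, finite derivative at 0, and finite limit at +∞; let η : [0,∞) → [0,∞) be nonincreasing and compactly supported. Let ε_n > 0 with ε_n → 0, let T_n : Ω → Ω be measurable maps with ℓ_n := sup_{x∈Ω} |T_n(x) − x| satisfying ℓ_n/ε_n → 0, and let u_n : Ω → ℝ be functions with u_n ∘ T_n measurable. Define (with the convention that division by zero gives zero, and η_ε(s) := ε^{−d} η(s/ε)): ḠMS_n(u_n) := ε_n^{−1} ∫_{Ω×Ω} ζ( |u_n(T_n(x)) − u_n(T_n(y))|^p / (ε_n^{p−q−1} |T_n(x) − T_n(y)|^q) ) η_{ε_n}(|T_n(x) − T_n(y)|) ρ(x) ρ(y) dx dy, and GAMS_n(u_n) := the same integral with ρ(x)² in place of ρ(x)ρ(y). Then liminf_{n→∞} ḠMS_n(u_n) = liminf_{n→∞} GAMS_n(u_n) and limsup_{n→∞} ḠMS_n(u_n)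 = limsup_{n→∞} GAMS_n(u_n), as identities in [0,∞]. -/
open MeasureTheory Filter Set
open scoped ENNReal NNReal

/-- The (transported, nonlocal) graph Mumford–Shah type energy with general weight `w`:
`ε⁻¹ ∫_{Ω×Ω} ζ( |u(T x) - u(T y)|^p / (ε^{p-q-1} |T x - T y|^q) ) η_ε(|T x - T y|) w(x,y) dx dy`,
where `η_ε(s) = ε^{-d} η(s/ε)`, as a value in `[0,∞]`. -/
noncomputable def gmsEnergy (d : ℕ) (Ω : Set (EuclideanSpace ℝ (Fin d))) (p q ε : ℝ)
    (ζ η : ℝ → ℝ) (T : EuclideanSpace ℝ (Fin d) → EuclideanSpace ℝ (Fin d))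
    (u : EuclideanSpace ℝ (Fin d) → ℝ)
    (w : EuclideanSpace ℝ (Fin d) → EuclideanSpace ℝ (Fin d) → ℝ) : ℝ≥0∞ :=
  ENNReal.ofReal ε⁻¹ *
    ∫⁻ pr in Ω ×ˢ Ω,
      ENNReal.ofReal
        (ζ (|u (T pr.1) - u (T pr.2)| ^ p / (ε ^ (p - q - 1) * ‖T pr.1 - T pr.2‖ ^ q)) *
          (ε ^ (-(d : ℝ)) * η (‖T pr.1 - T pr.2‖ / ε)) * w pr.1 pr.2)



open MeasureTheory Filter Set
open scoped ENNReal NNReal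

private lemma liminf_const_mul_aux {α : Type*} {f : Filter α} {u : α → ℝ≥0∞} {a : ℝ≥0∞}
    (ha_zero : a ≠ 0) (ha_top : a ≠ ⊤) :
    (f.liminf fun x => a * u x) = a * f.liminf u := by
  let g := fun x : ℝ≥0∞ => a * x
  have hg_bij : Function.Bijective g :=
    Function.bijective_iff_has_inverse.mpr
      ⟨fun x => a⁻¹ * x,
        ⟨fun x => by simp [g, ← mul_assoc, ENNReal.inv_mul_cancel ha_zero ha_top], fun x => by
          simp [g, ← mul_assoc, ENNReal.mul_inv_cancel ha_zero ha_top]⟩⟩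
  have hg_mono : StrictMono g :=
    Monotone.strictMono_of_injective (fun _ _ _ => by rwa [ENNReal.mul_le_mul_iff_right ha_zero ha_top])
      hg_bij.1
  let g_iso := StrictMono.orderIsoOfSurjective g hg_mono hg_bij.2
  exact (OrderIso.liminf_apply g_iso).symm

private lemma le_of_forall_one_add_mul {x y : ℝ≥0∞}
    (h : ∀ δ : ℝ, 0 < δ → x ≤ ENNReal.ofReal (1 + δ) * y) : x ≤ y := by
  have h1 : Tendsto (fun δ : ℝ => ENNReal.ofReal (1 + δ)) (nhdsWithin 0 (Ioi 0)) (nhds 1) := by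
    have h2 : Tendsto (fun δ : ℝ => 1 + δ) (nhdsWithin 0 (Ioi 0)) (nhds 1) := by
      have : Tendsto (fun δ : ℝ => 1 + δ) (nhds 0) (nhds (1 + 0)) :=
        (continuous_const.add continuous_id).tendsto 0
      rw [add_zero] at this
      exact tendsto_nhdsWithin_of_tendsto_nhds this
    simpa [Function.comp_def] using (ENNReal.continuous_ofReal.tendsto (1 : ℝ)).comp h2
  have ht : Tendsto (fun δ : ℝ => ENNReal.ofReal (1 + δ) * y) (nhdsWithin 0 (Ioi 0)) (nhds y) := by
    simpa using ENNReal.Tendsto.mul_const h1 (Or.inl one_ne_zero)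
  exact ge_of_tendsto ht (eventually_nhdsWithin_of_forall fun δ hδ => h δ hδ)

private lemma gmsEnergy_le_mul (d : ℕ) (Ω : Set (EuclideanSpace ℝ (Fin d)))
    (hΩm : MeasurableSet Ω) (p q ε : ℝ) (hε : 0 < ε) (ζ η : ℝ → ℝ)
    (hζnn : ∀ t, 0 ≤ ζ t) (hηnn : ∀ t, 0 ≤ η t) (M : ℝ) (hηM : ∀ t, M < t → η t = 0)
    (T : EuclideanSpace ℝ (Fin d) → EuclideanSpace ℝ (Fin d))
    (u : EuclideanSpace ℝ (Fin d) → ℝ)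
    (w₁ w₂ : EuclideanSpace ℝ (Fin d) → EuclideanSpace ℝ (Fin d) → ℝ)
    (K : ℝ) (hK : 0 ≤ K)
    (hw : ∀ x ∈ Ω, ∀ y ∈ Ω, ‖T x - T y‖ ≤ M * ε → w₁ x y ≤ K * w₂ x y) :
    gmsEnergy d Ω p q ε ζ η T u w₁ ≤ ENNReal.ofReal K * gmsEnergy d Ω p q ε ζ η T u w₂ := by
  unfold gmsEnergy
  rw [← mul_assoc, mul_comm (ENNReal.ofReal K) (ENNReal.ofReal ε⁻¹), mul_assoc]
  refine mul_le_mul_right ?_ _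
  rw [← lintegral_const_mul' _ _ ENNReal.ofReal_ne_top]
  refine lintegral_mono_ae ?_
  rw [ae_restrict_iff' (hΩm.prod hΩm)]
  refine ae_of_all _ fun pr hpr => ?_
  obtain ⟨h1, h2⟩ := (Set.mem_prod).1 hpr
  by_cases hηz : η (‖T pr.1 - T pr.2‖ / ε) = 0
  · simp [hηz]
  · have hsM : ‖T pr.1 - T pr.2‖ ≤ M * ε := by
      by_contra hcon
      push_neg at hcon
      exact hηz (hηM _ ((lt_div_iff₀ hε).2 (by linarith)))
    have hZ : 0 ≤ ζ (|u (T pr.1) - u (T pr.2)| ^ p /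
        (ε ^ (p - q - 1) * ‖T pr.1 - T pr.2‖ ^ q)) *
        (ε ^ (-(d : ℝ)) * η (‖T pr.1 - T pr.2‖ / ε)) :=
      mul_nonneg (hζnn _) (mul_nonneg (Real.rpow_nonneg hε.le _) (hηnn _))
    rw [← ENNReal.ofReal_mul hK]
    refine ENNReal.ofReal_le_ofReal ?_
    have := mul_le_mul_of_nonneg_left (hw _ h1 _ h2 hsM) hZ
    nlinarith [this]

/-- Asymptotic equivalence of the transported energy `ḠMS_n` (weight `ρ(x)ρ(y)`) and the
auxiliary energy `GAMS_n` (weight `ρ(x)²`): along any sequence `u_n`, the liminfs and the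
limsups coincide, as identities in `[0,∞]`. -/
theorem liminf_limsup_GMSbar_eq_GAMS (d : ℕ) (Ω : Set (EuclideanSpace ℝ (Fin d)))
    (hΩm : MeasurableSet Ω) (hΩb : Bornology.IsBounded Ω)
    (ρ : EuclideanSpace ℝ (Fin d) → ℝ) (L : ℝ≥0) (hρL : LipschitzOnWith L ρ Ω)
    (c C : ℝ) (hc : 0 < c) (hρ : ∀ x ∈ Ω, c ≤ ρ x ∧ ρ x ≤ C)
    (p q : ℝ) (hp : 1 ≤ p) (hq0 : 0 ≤ q) (hqp : q < p)
    (ζ : ℝ → ℝ) (hζconc : ConcaveOn ℝ (Ici 0) ζ) (hζmono : MonotoneOn ζ (Ici 0))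
    (hζ0 : ζ 0 = 0) (hζnn : ∀ t, 0 ≤ ζ t)
    (s : ℝ) (hζd : HasDerivWithinAt ζ s (Ici 0) 0)
    (Θ : ℝ) (hζΘ : Tendsto ζ atTop (nhds Θ))
    (η : ℝ → ℝ) (hηnn : ∀ t, 0 ≤ η t) (hηanti : AntitoneOn η (Ici 0))
    (M : ℝ) (hM : 0 < M) (hηM : ∀ t, M < t → η t = 0)
    (ε : ℕ → ℝ) (hεpos : ∀ n, 0 < ε n) (hε0 : Tendsto ε atTop (nhds 0))
    (T : ℕ → EuclideanSpace ℝ (Fin d) → EuclideanSpace ℝ (Fin d))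
    (hTm : ∀ n, Measurable (T n)) (hTmap : ∀ n, ∀ x ∈ Ω, T n x ∈ Ω)
    (ℓ : ℕ → ℝ) (hℓnn : ∀ n, 0 ≤ ℓ n) (hℓ : ∀ n, ∀ x ∈ Ω, ‖T n x - x‖ ≤ ℓ n)
    (hℓε : Tendsto (fun n => ℓ n / ε n) atTop (nhds 0))
    (u : ℕ → EuclideanSpace ℝ (Fin d) → ℝ) (hu : ∀ n, Measurable fun x => u n (T n x)) :
    liminf (fun n => gmsEnergy d Ω p q (ε n) ζ η (T n) (u n) (fun x y => ρ x * ρ y)) atTop =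
        liminf (fun n => gmsEnergy d Ω p q (ε n) ζ η (T n) (u n) (fun x y => ρ x ^ 2)) atTop ∧
      limsup (fun n => gmsEnergy d Ω p q (ε n) ζ η (T n) (u n) (fun x y => ρ x * ρ y)) atTop =
        limsup (fun n => gmsEnergy d Ω p q (ε n) ζ η (T n) (u n) (fun x y => ρ x ^ 2)) atTop := by
  set A := fun n => gmsEnergy d Ω p q (ε n) ζ η (T n) (u n) (fun x y => ρ x * ρ y) with hA
  set B := fun n => gmsEnergy d Ω p q (ε n) ζ η (T n) (u n) (fun x y => ρ x ^ 2) with hB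
  -- ℓ n → 0
  have hℓ0 : Tendsto ℓ atTop (nhds 0) := by
    have h1 : Tendsto (fun n => (ℓ n / ε n) * ε n) atTop (nhds 0) := by
      simpa using hℓε.mul hε0
    refine h1.congr fun n => ?_
    exact div_mul_cancel₀ _ (hεpos n).ne'
  have hD : Tendsto (fun n => (L : ℝ) * (2 * ℓ n + M * ε n)) atTop (nhds 0) := by
    have : Tendsto (fun n => (L : ℝ) * (2 * ℓ n + M * ε n)) atTop
        (nhds ((L : ℝ) * (2 * 0 + M * 0))) :=
      tendsto_const_nhds.mul (((hℓ0.const_mul 2)).add (hε0.const_mul M))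
    simpa using this
  -- key eventual two-sided comparison
  have key : ∀ δ : ℝ, 0 < δ →
      ∀ᶠ n in atTop, A n ≤ ENNReal.ofReal (1 + δ) * B n ∧
        B n ≤ ENNReal.ofReal (1 + δ) * A n := by
    intro δ hδ
    have hev : ∀ᶠ n in atTop, (L : ℝ) * (2 * ℓ n + M * ε n) < δ * c :=
      hD.eventually_lt_const (by positivity)
    filter_upwards [hev] with n hn
    have hwb : ∀ x ∈ Ω, ∀ y ∈ Ω, ‖T n x - T n y‖ ≤ M * ε n →
        |ρ x - ρ y| ≤ δ * c := by
      intro x hx y hy hT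
      have e1 := hℓ n x hx
      have e2 := hℓ n y hy
      have hxy : ‖x - y‖ ≤ 2 * ℓ n + M * ε n := by
        have : x - y = (x - T n x) + (T n x - T n y) + (T n y - y) := by abel
        rw [this]
        have h3 := norm_add₃_le (a := x - T n x) (b := T n x - T n y) (c := T n y - y)
        have h4 : ‖x - T n x‖ = ‖T n x - x‖ := norm_sub_rev _ _
        linarith
      have hlip : |ρ x - ρ y| ≤ (L : ℝ) * ‖x - y‖ := by
        have := hρL.dist_le_mul x hx y hy
        rwa [Real.dist_eq, dist_eq_norm] at this
      have hLnn : (0 : ℝ) ≤ (L : ℝ) := L.coe_nonneg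
      nlinarith [mul_le_mul_of_nonneg_left hxy hLnn]
    constructor
    · refine gmsEnergy_le_mul d Ω hΩm p q (ε n) (hεpos n) ζ η hζnn hηnn M hηM
        (T n) (u n) _ _ (1 + δ) (by linarith) ?_
      intro x hx y hy hT
      have h1 := hwb x hx y hy hT
      have hcx := (hρ x hx).1
      have hab := abs_le.1 h1
      nlinarith [mul_le_mul_of_nonneg_left (show ρ y ≤ ρ x + δ * c by linarith [hab.1])
          (show (0:ℝ) ≤ ρ x by linarith),
        mul_le_mul_of_nonneg_left hcx (mul_nonneg hδ.le (show (0:ℝ) ≤ ρ x by linarith))]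
    · refine gmsEnergy_le_mul d Ω hΩm p q (ε n) (hεpos n) ζ η hζnn hηnn M hηM
        (T n) (u n) _ _ (1 + δ) (by linarith) ?_
      intro x hx y hy hT
      have h1 := hwb x hx y hy hT
      have hcx := (hρ x hx).1
      have hcy := (hρ y hy).1
      have hab := abs_le.1 h1
      nlinarith [mul_le_mul_of_nonneg_left (show ρ x ≤ ρ y + δ * c by linarith [hab.2])
          (show (0:ℝ) ≤ ρ x by linarith),
        mul_le_mul_of_nonneg_left hcy (mul_nonneg hδ.le (show (0:ℝ) ≤ ρ x by linarith))]
  have main : ∀ F G : ℕ → ℝ≥0∞,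
      (∀ δ : ℝ, 0 < δ → ∀ᶠ n in atTop, F n ≤ ENNReal.ofReal (1 + δ) * G n) →
      liminf F atTop ≤ liminf G atTop ∧ limsup F atTop ≤ limsup G atTop := by
    intro F G h
    constructor
    · refine le_of_forall_one_add_mul fun δ hδ => ?_
      calc liminf F atTop ≤ liminf (fun n => ENNReal.ofReal (1 + δ) * G n) atTop :=
            liminf_le_liminf (h δ hδ)
        _ = ENNReal.ofReal (1 + δ) * liminf G atTop :=
            liminf_const_mul_aux ((ENNReal.ofReal_pos.2 (by linarith)).ne')
              ENNReal.ofReal_ne_top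
    · refine le_of_forall_one_add_mul fun δ hδ => ?_
      calc limsup F atTop ≤ limsup (fun n => ENNReal.ofReal (1 + δ) * G n) atTop :=
            limsup_le_limsup (h δ hδ)
        _ = ENNReal.ofReal (1 + δ) * limsup G atTop :=
            ENNReal.limsup_const_mul_of_ne_top ENNReal.ofReal_ne_top
  have hAB := main A B fun δ hδ => (key δ hδ).mono fun n hn => hn.1
  have hBA := main B A fun δ hδ => (key δ hδ).mono fun n hn => hn.2
  exact ⟨le_antisymm hAB.1 hBA.1, le_antisymm hAB.2 hBA.2⟩
end

section
/- Let Ω ⊂ ℝ^d be a bounded open set and ρ : Ω → ℝ a measurable function with 0 < c ≤ ρ(x) ≤ C < ∞. Let f : Ω → ℝ be bounded and measurable, and suppose there is a closed set K ⊂ ℝ^d with H^{d−1}(K) < ∞ such that f is continuous on Ω \ K. Let T_n : Ω → Ω be measurable maps with sup_{x∈Ω} |T_n(x) − x| → 0 as n → ∞. Then ∫_Ω |f(T_n(x)) − f(x)|² ρ(x) dx → 0 as n → ∞. -/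
set_option maxHeartbeats 1000000


open MeasureTheory Filter Metric Set
open scoped ENNReal

/-- Convergence of the fidelity term: if `f` is bounded, measurable and continuous off a closed
set `K` with `H^{d-1}(K) < ∞`, `ρ` is measurable with `0 < c ≤ ρ ≤ C` on a bounded open `Ω`, and
`T_n : Ω → Ω` are measurable maps with `sup_Ω |T_n - id| → 0`, then
`∫_Ω |f(T_n x) - f(x)|² ρ(x) dx → 0`. -/
theorem fidelity_term_tendsto_zero (d : ℕ)
    (Ω : Set (EuclideanSpace ℝ (Fin d))) (hΩo : IsOpen Ω) (hΩb : Bornology.IsBounded Ω)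
    (c C : ℝ) (hc : 0 < c)
    (ρ : EuclideanSpace ℝ (Fin d) → ℝ) (hρm : Measurable ρ)
    (hρ : ∀ x ∈ Ω, c ≤ ρ x ∧ ρ x ≤ C)
    (f : EuclideanSpace ℝ (Fin d) → ℝ) (hfm : Measurable f)
    (B : ℝ) (hfB : ∀ x ∈ Ω, |f x| ≤ B)
    (K : Set (EuclideanSpace ℝ (Fin d))) (hK : IsClosed K) (hKH : μH[(d : ℝ) - 1] K < ⊤)
    (hfc : ContinuousOn f (Ω \ K))
    (T : ℕ → EuclideanSpace ℝ (Fin d) → EuclideanSpace ℝ (Fin d))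
    (hTm : ∀ n, Measurable (T n)) (hTmap : ∀ n, ∀ x ∈ Ω, T n x ∈ Ω)
    (δ : ℕ → ℝ) (hδ : Tendsto δ atTop (nhds 0))
    (hTδ : ∀ n, ∀ x ∈ Ω, ‖T n x - x‖ ≤ δ n) :
    Tendsto (fun n => ∫ x in Ω, |f (T n x) - f x| ^ 2 * ρ x) atTop (nhds 0) := by
  rcases subsingleton_or_nontrivial (EuclideanSpace ℝ (Fin d)) with hss | hnt
  · have hT : ∀ n (x : EuclideanSpace ℝ (Fin d)), T n x = x :=
      fun n x => Subsingleton.elim _ _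
    simpa [hT] using (tendsto_const_nhds :
      Tendsto (fun _ : ℕ => (0 : ℝ)) atTop (nhds 0))
  -- volume of K is zero
  have hKvol : volume K = 0 := by
    have h1 : ((d : ℝ) - 1) < (d : ℝ) := by linarith
    have h2 : μH[(d : ℝ)] K = 0 := by
      rcases Measure.hausdorffMeasure_zero_or_top h1 K with h | h
      · exact h
      · exact absurd h hKH.ne
    have hac : (volume : Measure (EuclideanSpace ℝ (Fin d))) ≪
        μH[(Module.finrank ℝ (EuclideanSpace ℝ (Fin d)) : ℝ)] :=
      Measure.absolutelyContinuous_isAddHaarMeasure _ _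
    rw [finrank_euclideanSpace_fin] at hac
    exact hac h2
  -- the bad set
  set S₀ : Set (EuclideanSpace ℝ (Fin d)) := K ∪ Ωᶜ with hS₀def
  have hS₀c : IsClosed S₀ := hK.union hΩo.isClosed_compl
  have hS₀ne : S₀.Nonempty := by
    rcases eq_empty_or_nonempty Ωᶜ with h | h
    · exfalso
      have : Ω = univ := by
        rw [← compl_empty_iff]; exact h
      exact NormedSpace.unbounded_univ ℝ (EuclideanSpace ℝ (Fin d)) (this ▸ hΩb)
    · exact h.mono subset_union_right
  have hΩm : MeasurableSet Ω := hΩo.measurableSet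
  have hVlt : volume Ω < ⊤ := hΩb.measure_lt_top
  set Vt : ℝ := (volume Ω).toReal with hVt
  have hVt0 : 0 ≤ Vt := ENNReal.toReal_nonneg
  -- uniform bound on the integrand
  set M : ℝ := max ((2 * B) ^ 2 * C) 1 with hMdef
  have hM0 : 0 < M := lt_of_lt_of_le one_pos (le_max_right _ _)
  have hgM : ∀ n x, x ∈ Ω → |f (T n x) - f x| ^ 2 * ρ x ≤ M := by
    intro n x hx
    have h1 : |f (T n x) - f x| ≤ 2 * B := by
      calc |f (T n x) - f x| ≤ |f (T n x)| + |f x| := abs_sub _ _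
        _ ≤ B + B := add_le_add (hfB _ (hTmap n x hx)) (hfB x hx)
        _ = 2 * B := by ring
    have h2 : |f (T n x) - f x| ^ 2 ≤ (2 * B) ^ 2 :=
      pow_le_pow_left₀ (abs_nonneg _) h1 2
    have h3 : ρ x ≤ C := (hρ x hx).2
    have h4 : 0 ≤ ρ x := le_of_lt (lt_of_lt_of_le hc (hρ x hx).1)
    calc |f (T n x) - f x| ^ 2 * ρ x ≤ (2 * B) ^ 2 * C :=
          mul_le_mul h2 h3 h4 (sq_nonneg _)
      _ ≤ M := le_max_left _ _
  have hg0 : ∀ n x, x ∈ Ω → 0 ≤ |f (T n x) - f x| ^ 2 * ρ x := fun n x hx =>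
    mul_nonneg (sq_nonneg _) (le_of_lt (lt_of_lt_of_le hc (hρ x hx).1))
  -- integrability of the integrand
  have hgint : ∀ n, IntegrableOn (fun x => |f (T n x) - f x| ^ 2 * ρ x) Ω := by
    intro n
    have hmeas : Measurable fun x => |f (T n x) - f x| ^ 2 * ρ x :=
      ((((hfm.comp (hTm n)).sub hfm).abs.pow measurable_const).mul hρm)
    refine Integrable.mono' ((integrableOn_const_iff (C := M)).2 (Or.inr hVlt))
      hmeas.aestronglyMeasurable ?_
    rw [ae_restrict_iff' hΩm]
    refine ae_of_all _ fun x hx => ?_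
    rw [Real.norm_eq_abs, abs_of_nonneg (hg0 n x hx)]
    exact hgM n x hx
  set Cmax : ℝ := max C 1 with hCmax
  have hCmax0 : 0 < Cmax := lt_of_lt_of_le one_pos (le_max_right _ _)
  -- main ε-argument
  rw [NormedAddCommGroup.tendsto_nhds_zero]
  intro ε hε
  -- choose η
  set Aset : ℝ → Set (EuclideanSpace ℝ (Fin d)) :=
    fun r => Ω ∩ {x | infDist x S₀ < r} with hAdef
  have hAopen : ∀ r, IsOpen (Aset r) := fun r =>
    hΩo.inter (isOpen_lt (continuous_infDist_pt S₀) continuous_const)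
  have hiInter : (⋂ n : ℕ, Aset (1 / (n + 1))) = Ω ∩ K := by
    ext x
    simp only [mem_iInter, hAdef, mem_inter_iff, mem_setOf_eq]
    constructor
    · rintro h
      have hxΩ : x ∈ Ω := (h 0).1
      refine ⟨hxΩ, ?_⟩
      have hd0 : infDist x S₀ = 0 := by
        by_contra hne
        have hpos : 0 < infDist x S₀ := lt_of_le_of_ne infDist_nonneg (Ne.symm hne)
        obtain ⟨n, hn⟩ := exists_nat_one_div_lt hpos
        exact absurd (h n).2 (not_lt.2 (le_of_lt hn))
      have : x ∈ S₀ := (hS₀c.mem_iff_infDist_zero hS₀ne).2 hd0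
      rcases (Set.mem_union _ _ _).1 this with h' | h'
      · exact h'
      · exact absurd hxΩ h'
    · rintro ⟨hxΩ, hxK⟩
      intro n
      refine ⟨hxΩ, ?_⟩
      have hxS : x ∈ S₀ := Set.mem_union_left _ hxK
      rw [infDist_zero_of_mem hxS]
      positivity
  have htend : Tendsto (fun n : ℕ => volume (Aset (1 / (n + 1)))) atTop (nhds 0) := by
    have h := tendsto_measure_iInter_atTop (μ := volume)
      (s := fun n : ℕ => Aset (1 / (n + 1)))
      (fun n => (hAopen _).measurableSet.nullMeasurableSet)
      (fun n m hnm => by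
        apply inter_subset_inter_right
        intro x hx
        simp only [mem_setOf_eq] at hx ⊢
        refine lt_of_lt_of_le hx ?_
        apply one_div_le_one_div_of_le (by positivity)
        exact_mod_cast add_le_add_left (Nat.cast_le.2 hnm) 1)
      ⟨0, (lt_of_le_of_lt (measure_mono inter_subset_left) hVlt).ne⟩
    rw [hiInter] at h
    have : volume (Ω ∩ K) = 0 :=
      measure_mono_null inter_subset_right hKvol
    rwa [this] at h
  have hεM : (0 : ℝ≥0∞) < ENNReal.ofReal (ε / (2 * M)) :=
    ENNReal.ofReal_pos.2 (by positivity)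
  obtain ⟨n₀, hn₀⟩ := (htend.eventually_lt_const hεM).exists
  set η : ℝ := (1 / ((n₀ : ℝ) + 1)) / 2 with hηdef
  have hη0 : 0 < η := by positivity
  have hAvol : volume (Aset (2 * η)) < ENNReal.ofReal (ε / (2 * M)) := by
    have : 2 * η = 1 / ((n₀ : ℝ) + 1) := by rw [hηdef]; ring
    rwa [this]
  -- the compact good set
  set Cpt : Set (EuclideanSpace ℝ (Fin d)) := {x | η ≤ infDist x S₀} with hCptdef
  have hCptΩ : Cpt ⊆ Ω \ K := by
    intro x hx
    have hxS : x ∉ S₀ := by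
      intro h
      rw [mem_setOf_eq, infDist_zero_of_mem h] at hx
      exact absurd hx (not_le.2 hη0)
    exact ⟨by_contra fun h => hxS (Set.mem_union_right _ h),
      fun h => hxS (Set.mem_union_left _ h)⟩
  have hCptcompact : IsCompact Cpt := by
    refine Metric.isCompact_of_isClosed_isBounded ?_ ?_
    · exact isClosed_le continuous_const (continuous_infDist_pt S₀)
    · exact hΩb.subset (hCptΩ.trans diff_subset)
  have hfu : UniformContinuousOn f Cpt :=
    hCptcompact.uniformContinuousOn_of_continuous (hfc.mono hCptΩ)
  -- ε'
  set ε' : ℝ := Real.sqrt (ε / (2 * Cmax * (Vt + 1))) with hε'def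
  have hε'0 : 0 < ε' := Real.sqrt_pos.2 (by positivity)
  have hε'sq : ε' ^ 2 = ε / (2 * Cmax * (Vt + 1)) := Real.sq_sqrt (by positivity)
  obtain ⟨δ₁, hδ₁0, hδ₁⟩ := Metric.uniformContinuousOn_iff.1 hfu ε' hε'0
  -- eventually δ n is small
  have hev : ∀ᶠ n in atTop, δ n < min η δ₁ :=
    hδ.eventually (eventually_lt_nhds (lt_min hη0 hδ₁0))
  filter_upwards [hev] with n hn
  have hδnη : δ n < η := lt_of_lt_of_le hn (min_le_left _ _)
  have hδnδ₁ : δ n < δ₁ := lt_of_lt_of_le hn (min_le_right _ _)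
  -- pointwise bound
  set h : EuclideanSpace ℝ (Fin d) → ℝ :=
    fun x => ε' ^ 2 * Cmax + (Aset (2 * η)).indicator (fun _ => M) x with hhdef
  have hpt : ∀ x ∈ Ω, |f (T n x) - f x| ^ 2 * ρ x ≤ h x := by
    intro x hx
    by_cases hxA : x ∈ Aset (2 * η)
    · have : h x = ε' ^ 2 * Cmax + M := by
        rw [hhdef]; simp [indicator_of_mem hxA]
      rw [this]
      have : |f (T n x) - f x| ^ 2 * ρ x ≤ M := hgM n x hx
      nlinarith [sq_nonneg ε', hCmax0.le, this]
    · -- good region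
      have hxd : 2 * η ≤ infDist x S₀ := by
        by_contra hlt
        exact hxA ⟨hx, not_le.1 hlt⟩
      have hxC : x ∈ Cpt := by
        rw [hCptdef, mem_setOf_eq]; linarith
      have hTd : dist (T n x) x ≤ δ n := by
        rw [dist_eq_norm]; exact hTδ n x hx
      have hTC : T n x ∈ Cpt := by
        rw [hCptdef, mem_setOf_eq]
        have := infDist_le_infDist_add_dist (x := x) (y := T n x) (s := S₀)
        have hdist : dist x (T n x) ≤ δ n := by rwa [dist_comm]
        linarith
      have hfsmall : |f (T n x) - f x| < ε' := by
        have := hδ₁ (T n x) hTC x hxC (lt_of_le_of_lt hTd hδnδ₁)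
        rwa [Real.dist_eq] at this
      have h2 : |f (T n x) - f x| ^ 2 ≤ ε' ^ 2 :=
        pow_le_pow_left₀ (abs_nonneg _) hfsmall.le 2
      have h3 : ρ x ≤ Cmax := le_trans (hρ x hx).2 (le_max_left _ _)
      have h4 : 0 ≤ ρ x := le_of_lt (lt_of_lt_of_le hc (hρ x hx).1)
      have : |f (T n x) - f x| ^ 2 * ρ x ≤ ε' ^ 2 * Cmax :=
        mul_le_mul h2 h3 h4 (sq_nonneg _)
      rw [hhdef]
      simp only [indicator_of_notMem hxA, add_zero]
      exact this
  -- integrability of h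
  have hMint : IntegrableOn (fun _ => M) (Aset (2 * η)) :=
    (integrableOn_const_iff (C := M)).2
      (Or.inr (lt_of_le_of_lt (measure_mono inter_subset_left) hVlt))
  have hhint : IntegrableOn h Ω := by
    refine Integrable.add ((integrableOn_const_iff (C := ε' ^ 2 * Cmax)).2 (Or.inr hVlt)) ?_
    exact (hMint.integrable_indicator (hAopen _).measurableSet).integrableOn
  -- bound the integral
  have hIle : ∫ x in Ω, |f (T n x) - f x| ^ 2 * ρ x ≤ ∫ x in Ω, h x :=
    setIntegral_mono_on (hgint n) hhint hΩm hpt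
  have hInonneg : 0 ≤ ∫ x in Ω, |f (T n x) - f x| ^ 2 * ρ x :=
    setIntegral_nonneg hΩm (hg0 n)
  have hAsub : Ω ∩ Aset (2 * η) = Aset (2 * η) :=
    inter_eq_self_of_subset_right inter_subset_left
  have hIh : ∫ x in Ω, h x
      = Vt * (ε' ^ 2 * Cmax) + (volume (Aset (2 * η))).toReal * M := by
    rw [hhdef]
    rw [integral_add ((integrableOn_const_iff (C := ε' ^ 2 * Cmax)).2 (Or.inr hVlt))
      ((hMint.integrable_indicator (hAopen _).measurableSet).integrableOn)]
    rw [setIntegral_const, setIntegral_indicator (hAopen _).measurableSet, hAsub,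
      setIntegral_const]
    simp [smul_eq_mul, hVt, Measure.real]
  have hterm1 : Vt * (ε' ^ 2 * Cmax) ≤ ε / 2 := by
    rw [hε'sq]
    have heq : Vt * (ε / (2 * Cmax * (Vt + 1)) * Cmax) = ε * Vt / (2 * (Vt + 1)) := by
      field_simp
    rw [heq, div_le_div_iff₀ (by positivity) (by norm_num)]
    nlinarith [hε.le, hVt0]
  have hterm2 : (volume (Aset (2 * η))).toReal * M < ε / 2 := by
    have h1 : (volume (Aset (2 * η))).toReal < ε / (2 * M) :=
      ENNReal.toReal_lt_of_lt_ofReal hAvol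
    calc (volume (Aset (2 * η))).toReal * M < (ε / (2 * M)) * M :=
          mul_lt_mul_of_pos_right h1 hM0
      _ = ε / 2 := by field_simp
  rw [Real.norm_eq_abs, abs_of_nonneg hInonneg]
  calc ∫ x in Ω, |f (T n x) - f x| ^ 2 * ρ x ≤ ∫ x in Ω, h x := hIle
    _ = Vt * (ε' ^ 2 * Cmax) + (volume (Aset (2 * η))).toReal * M := hIh
    _ < ε / 2 + ε / 2 := by
        exact add_lt_add_of_le_of_lt hterm1 hterm2
    _ = ε := by ring
end

section
/- Let μ be a compactly supported Borel probability measure on ℝ^d, let p ∈ [1,∞), and for each n let μ̃_n be a Borel probability measure on ℝ^d absolutely continuous with respect to μ whose density ρ_n = dμ̃_n/dμ converges to 1 uniformly on the support of μ. Let f ∈ L^p(μ) and f_n ∈ L^p(μ) with ∫ |f_n − f|^p dμ → 0 as n → ∞. Then there exist Borel probability measures π_n on ℝ^d × ℝ^d whose first marginal is μ (i.e. the pushforward of π_n under (x,y) ↦ x is μ) and whose second marginal is μ̃_n, such that ∫_{ℝ^d × ℝ^d} ( |x − y|^p + |f(x) − f_n(y)|^p ) dπ_n(x,y) → 0 as n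 → ∞. -/
open MeasureTheory Filter
open scoped ENNReal

/-- The (topological) support of a Borel measure: the set of points all of whose open
neighborhoods have positive measure. -/
def measSupport {E : Type*} [TopologicalSpace E] [MeasurableSpace E]
    (μ : Measure E) : Set E :=
  {x | ∀ U : Set E, IsOpen U → x ∈ U → μ U ≠ 0}

lemma isClosed_measSupport {E : Type*} [TopologicalSpace E] [MeasurableSpace E]
    (μ : Measure E) : IsClosed (measSupport μ) := by
  rw [← isOpen_compl_iff, isOpen_iff_forall_mem_open]
  intro x hx
  simp only [measSupport, Set.mem_compl_iff, Set.mem_setOf_eq, not_forall] at hx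
  obtain ⟨U, hU, hxU, hμU⟩ := hx
  refine ⟨U, fun y hy => ?_, hU, hxU⟩
  simp only [measSupport, Set.mem_compl_iff, Set.mem_setOf_eq, not_forall]
  exact ⟨U, hU, hy, hμU⟩

lemma measSupport_compl_null {E : Type*} [TopologicalSpace E] [MeasurableSpace E]
    [SecondCountableTopology E] (μ : Measure E) :
    μ (measSupport μ)ᶜ = 0 := by
  obtain ⟨B, hBc, -, hB⟩ := TopologicalSpace.exists_countable_basis E
  set N : Set (Set E) := {U | U ∈ B ∧ μ U = 0} with hN
  have h1 : μ (⋃₀ N) = 0 := by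
    rw [measure_sUnion_null_iff (hBc.mono fun U hU => hU.1)]
    exact fun s hs => hs.2
  refine measure_mono_null (fun x hx => ?_) h1
  simp only [measSupport, Set.mem_compl_iff, Set.mem_setOf_eq, not_forall] at hx
  obtain ⟨U, hU, hxU, hμU⟩ := hx
  rw [not_ne_iff] at hμU
  obtain ⟨V, hVB, hxV, hVU⟩ := hB.exists_subset_of_mem_open hxU hU
  exact ⟨V, ⟨hVB, measure_mono_null hVU hμU⟩, hxV⟩

lemma rpow_abs_add_le (p a b : ℝ) (hp : 1 ≤ p) :
    |a + b| ^ p ≤ 2 ^ p * (|a| ^ p + |b| ^ p) := by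
  have h0 : (0:ℝ) ≤ p := le_trans zero_le_one hp
  have h1 : |a + b| ≤ 2 * max |a| |b| := by
    calc |a + b| ≤ |a| + |b| := abs_add_le _ _
    _ ≤ 2 * max |a| |b| := by
        rcases le_total |a| |b| with h | h
        · rw [max_eq_right h]; linarith
        · rw [max_eq_left h]; linarith
  calc |a + b| ^ p ≤ (2 * max |a| |b|) ^ p :=
        Real.rpow_le_rpow (abs_nonneg _) h1 h0
  _ = 2 ^ p * (max |a| |b|) ^ p :=
        Real.mul_rpow (by norm_num) (le_max_of_le_left (abs_nonneg a))
  _ ≤ 2 ^ p * (|a| ^ p + |b| ^ p) := by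
      apply mul_le_mul_of_nonneg_left _ (Real.rpow_nonneg (by norm_num) p)
      rcases le_total |a| |b| with h | h
      · rw [max_eq_right h]
        have := Real.rpow_nonneg (abs_nonneg a) p
        linarith
      · rw [max_eq_left h]
        have := Real.rpow_nonneg (abs_nonneg b) p
        linarith

theorem tlp_aux {E : Type*} [NormedAddCommGroup E] [MeasurableSpace E] [BorelSpace E]
    [SecondCountableTopology E]
    (p : ℝ) (hp : 1 ≤ p)
    (μ : Measure E) [IsProbabilityMeasure μ]
    (Kc : Set E) (hKc : IsCompact Kc) (hμKc : μ Kcᶜ = 0)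
    (ρn : ℕ → E → ℝ)
    (μt : ℕ → Measure E)
    (hμt : ∀ n, μt n = μ.withDensity fun x => ENNReal.ofReal (ρn n x))
    (hμtprob : ∀ n, IsProbabilityMeasure (μt n))
    (hunif : TendstoUniformlyOn (fun n x => ρn n x) (fun _ => 1) atTop (measSupport μ))
    (f : E → ℝ) (hf : MemLp f (ENNReal.ofReal p) μ)
    (fn : ℕ → E → ℝ) (hfn : ∀ n, MemLp (fn n) (ENNReal.ofReal p) μ)
    (hconv : Tendsto (fun n => ∫⁻ x, ENNReal.ofReal (|fn n x - f x| ^ p) ∂μ) atTop (nhds 0)) :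
    ∃ π : ℕ → Measure (E × E),
      (∀ n, (π n).map Prod.fst = μ) ∧ (∀ n, (π n).map Prod.snd = μt n) ∧
        Tendsto
          (fun n =>
            ∫⁻ pr, ENNReal.ofReal (‖pr.1 - pr.2‖ ^ p + |f pr.1 - fn n pr.2| ^ p) ∂(π n))
          atTop (nhds 0) := by
  have hp0 : (0:ℝ) < p := lt_of_lt_of_le one_pos hp
  have hφ : Measurable fun t : ℝ => ENNReal.ofReal (|t| ^ p) := by fun_prop
  -- densities
  have hac : ∀ n, μt n ≪ μ := fun n => (hμt n) ▸ withDensity_absolutelyContinuous μ _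
  set r : ℕ → E → ℝ≥0∞ := fun n => (μt n).rnDeriv μ with hr
  have hrmeas : ∀ n, Measurable (r n) := fun n => Measure.measurable_rnDeriv _ _
  have hwd : ∀ n, μ.withDensity (r n) = μt n := fun n =>
    Measure.withDensity_rnDeriv_eq _ _ (hac n)
  set g : ℕ → E → ℝ≥0∞ := fun n x => min (r n x) 1 with hgdef
  set A : ℕ → E → ℝ≥0∞ := fun n x => 1 - g n x with hAdef
  set B : ℕ → E → ℝ≥0∞ := fun n x => r n x - g n x with hBdef
  have hgmeas : ∀ n, Measurable (g n) := fun n => (hrmeas n).min measurable_const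
  have hAmeas : ∀ n, Measurable (A n) := fun n => measurable_const.sub (hgmeas n)
  have hBmeas : ∀ n, Measurable (B n) := fun n => (hrmeas n).sub (hgmeas n)
  set ν : ℕ → Measure E := fun n => μ.withDensity (g n) with hν
  set α : ℕ → Measure E := fun n => μ.withDensity (A n) with hα
  set β : ℕ → Measure E := fun n => μ.withDensity (B n) with hβ
  set m : ℕ → ℝ≥0∞ := fun n => α n Set.univ with hm
  have hνn : ∀ n, ν n = μ.withDensity (g n) := fun _ => rfl
  have hαn : ∀ n, α n = μ.withDensity (A n) := fun _ => rfl
  have hβn : ∀ n, β n = μ.withDensity (B n) := fun _ => rfl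
  have hmn : ∀ n, m n = α n Set.univ := fun _ => rfl
  have hνα : ∀ n, ν n + α n = μ := by
    intro n
    have h1 : g n + A n = (1 : E → ℝ≥0∞) :=
      funext fun x => add_tsub_cancel_of_le (min_le_right (r n x) 1)
    rw [hνn, hαn, ← withDensity_add_left (hgmeas n) (A n), h1, withDensity_one]
  have hνβ : ∀ n, ν n + β n = μt n := by
    intro n
    have h1 : g n + B n = r n :=
      funext fun x => add_tsub_cancel_of_le (min_le_left (r n x) 1)
    rw [hνn, hβn, ← withDensity_add_left (hgmeas n) (B n), h1, hwd]
  have hαle : ∀ n, α n ≤ μ := by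
    intro n
    rw [hαn]
    conv_rhs => rw [← withDensity_one (μ := μ)]
    exact withDensity_mono (Filter.Eventually.of_forall fun x => tsub_le_self)
  have hνle : ∀ n, ν n ≤ μ := by
    intro n
    rw [hνn]
    conv_rhs => rw [← withDensity_one (μ := μ)]
    exact withDensity_mono (Filter.Eventually.of_forall fun x => min_le_right _ _)
  have hmle1 : ∀ n, m n ≤ 1 := by
    intro n
    calc m n ≤ μ Set.univ := hαle n Set.univ
    _ = 1 := measure_univ
  have hmne : ∀ n, m n ≠ ∞ := fun n => ((hmle1 n).trans_lt ENNReal.one_lt_top).ne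
  have hBuniv : ∀ n, β n Set.univ = m n := by
    intro n
    haveI := hμtprob n
    have hgle : ∫⁻ x, g n x ∂μ ≤ 1 := by
      calc ∫⁻ x, g n x ∂μ ≤ ∫⁻ _, 1 ∂μ := lintegral_mono fun x => min_le_right _ _
      _ = 1 := by simp
    have hgfin : ∫⁻ x, g n x ∂μ ≠ ∞ := (hgle.trans_lt ENNReal.one_lt_top).ne
    have h1 : β n Set.univ = ∫⁻ x, B n x ∂μ := by
      rw [hβn, withDensity_apply _ MeasurableSet.univ, Measure.restrict_univ]
    have h2 : m n = ∫⁻ x, A n x ∂μ := by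
      rw [hmn, hαn, withDensity_apply _ MeasurableSet.univ, Measure.restrict_univ]
    have h3 : ∫⁻ x, B n x ∂μ = (∫⁻ x, r n x ∂μ) - ∫⁻ x, g n x ∂μ :=
      lintegral_sub (hgmeas n) hgfin
        (Filter.Eventually.of_forall fun x => min_le_left _ _)
    have h4 : ∫⁻ x, A n x ∂μ = (∫⁻ _, (1:ℝ≥0∞) ∂μ) - ∫⁻ x, g n x ∂μ :=
      lintegral_sub (hgmeas n) hgfin
        (Filter.Eventually.of_forall fun x => min_le_right _ _)
    have h5 : ∫⁻ x, r n x ∂μ = 1 := by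
      rw [hr, Measure.lintegral_rnDeriv (hac n)]
      exact measure_univ
    have h6 : ∫⁻ _, (1:ℝ≥0∞) ∂μ = 1 := by simp
    rw [h1, h2, h3, h4, h5, h6]
  have hαfin : ∀ n, IsFiniteMeasure (α n) :=
    fun n => ⟨(hmle1 n).trans_lt ENNReal.one_lt_top⟩
  have hβfin : ∀ n, IsFiniteMeasure (β n) :=
    fun n => ⟨((hBuniv n).le.trans (hmle1 n)).trans_lt ENNReal.one_lt_top⟩
  -- the diagonal embedding
  have hdiagEmb : MeasurableEmbedding (fun x : E => (x, x)) := by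
    have h1 : Topology.IsEmbedding (fun x : E => (x, x)) :=
      isEmbedding_graph continuous_id
    refine h1.measurableEmbedding ?_
    rw [show (Set.range fun x : E => (x, x)) = Set.diagonal E from Set.range_diag]
    exact isClosed_diagonal.measurableSet
  -- the couplings
  set π : ℕ → Measure (E × E) :=
    fun n => (ν n).map (fun x => (x, x)) + (m n)⁻¹ • ((α n).prod (β n)) with hπ
  have hdiagmeas : Measurable (fun x : E => (x, x)) := measurable_id.prodMk measurable_id
  refine ⟨π, ?_, ?_, ?_⟩
  · -- first marginal
    intro n
    haveI := hαfin n; haveI := hβfin n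
    have h1 : ((ν n).map (fun x => (x,x))).map Prod.fst = ν n := by
      rw [Measure.map_map measurable_fst hdiagmeas]
      have : (Prod.fst ∘ fun x : E => (x, x)) = id := rfl
      rw [this, Measure.map_id]
    have h2 : (((m n)⁻¹ • ((α n).prod (β n))).map Prod.fst) = α n := by
      rw [Measure.map_smul, Measure.map_fst_prod, hBuniv n, smul_smul]
      rcases eq_or_ne (m n) 0 with h | h
      · have hα0 : α n = 0 := Measure.measure_univ_eq_zero.mp h
        rw [hα0]; simp
      · rw [ENNReal.inv_mul_cancel h (hmne n), one_smul]
    rw [hπ, Measure.map_add _ _ measurable_fst, h1, h2, hνα n]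
  · -- second marginal
    intro n
    haveI := hαfin n; haveI := hβfin n
    have h1 : ((ν n).map (fun x => (x,x))).map Prod.snd = ν n := by
      rw [Measure.map_map measurable_snd hdiagmeas]
      have : (Prod.snd ∘ fun x : E => (x, x)) = id := rfl
      rw [this, Measure.map_id]
    have h2 : (((m n)⁻¹ • ((α n).prod (β n))).map Prod.snd) = β n := by
      rw [Measure.map_smul, Measure.map_snd_prod]
      have hmn : α n Set.univ = m n := rfl
      rw [hmn, smul_smul]
      rcases eq_or_ne (m n) 0 with h | h
      · have hβ0 : β n = 0 := by
          apply Measure.measure_univ_eq_zero.mp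
          rw [hBuniv n, h]
        rw [hβ0]; simp
      · rw [ENNReal.inv_mul_cancel h (hmne n), one_smul]
    rw [hπ, Measure.map_add _ _ measurable_snd, h1, h2, hνβ n]
  -- the convergence
  have hπn : ∀ n, π n = (ν n).map (fun x => (x, x)) + (m n)⁻¹ • ((α n).prod (β n)) :=
    fun _ => rfl
  -- constants
  have hSmeas : MeasurableSet (measSupport μ) := (isClosed_measSupport μ).measurableSet
  have hScompl : μ (measSupport μ)ᶜ = 0 := measSupport_compl_null μ
  obtain ⟨R, hRKc⟩ : ∃ R : ℝ, ∀ x ∈ Kc, ∀ y ∈ Kc, ‖x - y‖ ≤ R := by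
    obtain ⟨R, hR⟩ := Metric.isBounded_iff.mp hKc.isBounded
    exact ⟨R, fun x hx y hy => by simpa [dist_eq_norm] using hR hx hy⟩
  set Dn : ℕ → ℝ≥0∞ := fun n => ∫⁻ x, ENNReal.ofReal (|fn n x - f x| ^ p) ∂μ with hDn
  set C : ℝ≥0∞ := ENNReal.ofReal (R ^ p) with hC
  set c2 : ℝ≥0∞ := ENNReal.ofReal (2 ^ p) with hc2
  have hc2top : c2 ≠ ∞ := ENNReal.ofReal_ne_top
  set F : ℝ≥0∞ := ∫⁻ x, ENNReal.ofReal (|f x| ^ p) ∂μ with hF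
  have hpne0 : ENNReal.ofReal p ≠ 0 := by
    simp only [ne_eq, ENNReal.ofReal_eq_zero, not_le]; exact hp0
  have hFfin : F ≠ ∞ := by
    have h1 := lintegral_rpow_enorm_lt_top_of_eLpNorm_lt_top hpne0 ENNReal.ofReal_ne_top hf.2
    rw [ENNReal.toReal_ofReal hp0.le] at h1
    refine (lt_of_le_of_lt (le_of_eq (lintegral_congr fun x => ?_)) h1).ne
    rw [← Real.norm_eq_abs, ← ENNReal.ofReal_rpow_of_nonneg (norm_nonneg _) hp0.le,
      ofReal_norm_eq_enorm]
  set K : ℝ≥0∞ := C + c2 * F + c2 * c2 * (1 + F) + 1 with hK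
  have hK0 : K ≠ 0 := by simp [hK]
  have hKtop : K ≠ ∞ := by
    rw [hK]
    refine ENNReal.add_ne_top.2 ⟨ENNReal.add_ne_top.2 ⟨ENNReal.add_ne_top.2
      ⟨ENNReal.ofReal_ne_top, ENNReal.mul_ne_top hc2top hFfin⟩,
      ENNReal.mul_ne_top (ENNReal.mul_ne_top hc2top hc2top)
        (ENNReal.add_ne_top.2 ⟨ENNReal.one_ne_top, hFfin⟩)⟩, ENNReal.one_ne_top⟩
  rw [ENNReal.tendsto_nhds_zero]
  intro ε hε
  set ε' : ℝ≥0∞ := min ε 1 with hε'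
  have hε'pos : 0 < ε' := lt_min hε zero_lt_one
  have hε'0 : ε' ≠ 0 := hε'pos.ne'
  have hε'top : ε' ≠ ∞ := ((min_le_right _ _).trans_lt ENNReal.one_lt_top).ne
  have h2K0 : (2:ℝ≥0∞) * K ≠ 0 := by simp [hK0]
  have h2Ktop : (2:ℝ≥0∞) * K ≠ ∞ := ENNReal.mul_ne_top ENNReal.ofNat_ne_top hKtop
  set δ' : ℝ≥0∞ := ε' * (2 * K)⁻¹ with hδ'
  have hδ'0 : δ' ≠ 0 := mul_ne_zero hε'0 (ENNReal.inv_ne_zero.2 h2Ktop)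
  have hδ'top : δ' ≠ ∞ := ENNReal.mul_ne_top hε'top (ENNReal.inv_ne_top.2 h2K0)
  set δ : ℝ := δ'.toReal with hδ
  have hδpos : 0 < δ := ENNReal.toReal_pos hδ'0 hδ'top
  have hδeq : ENNReal.ofReal δ = δ' := ENNReal.ofReal_toReal hδ'top
  have hδ'K : δ' * K = ε' / 2 := by
    rw [hδ', ENNReal.mul_inv (Or.inl (by simp : (2:ℝ≥0∞) ≠ 0)) (Or.inl ENNReal.ofNat_ne_top)]
    calc ε' * (2⁻¹ * K⁻¹) * K = ε' * 2⁻¹ * (K⁻¹ * K) := by ring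
    _ = ε' * 2⁻¹ := by rw [ENNReal.inv_mul_cancel hK0 hKtop, mul_one]
    _ = ε' / 2 := by rw [div_eq_mul_inv]
  have hev1 : ∀ᶠ n in atTop, ∀ x ∈ measSupport μ, |ρn n x - 1| ≤ δ := by
    filter_upwards [Metric.tendstoUniformlyOn_iff.mp hunif δ hδpos] with n hn x hx
    have h := hn x hx
    rw [Real.dist_eq] at h
    have h2 : |1 - ρn n x| ≤ δ := le_of_lt h
    rwa [abs_sub_comm] at h2
  have hmin0 : (0:ℝ≥0∞) < min (ε' / 2) 1 :=
    lt_min (ENNReal.div_pos hε'0 ENNReal.ofNat_ne_top) zero_lt_one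
  have hev2 : ∀ᶠ n in atTop, Dn n ≤ min (ε' / 2) 1 :=
    ENNReal.tendsto_nhds_zero.mp hconv _ hmin0
  filter_upwards [hev1, hev2] with n hn1 hn2
  haveI := hαfin n; haveI := hβfin n; haveI := hμtprob n
  show ∫⁻ pr, ENNReal.ofReal (‖pr.1 - pr.2‖ ^ p + |f pr.1 - fn n pr.2| ^ p) ∂(π n) ≤ ε
  -- a.e. upper bound on the density
  have hup : r n ≤ᵐ[μ] fun _ => 1 + δ' := by
    apply ae_le_of_forall_setLIntegral_le_of_sigmaFinite (hrmeas n)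
    intro s hs _
    have e1 : ∫⁻ x in s, r n x ∂μ = μt n s := Measure.setLIntegral_rnDeriv (hac n) s
    have e2 : μt n s = μt n (s ∩ measSupport μ) := by
      refine le_antisymm ?_ (measure_mono Set.inter_subset_left)
      have h0 : μt n (s \ measSupport μ) = 0 :=
        measure_mono_null (fun x hx => hx.2) ((hac n) hScompl)
      calc μt n s ≤ μt n (s ∩ measSupport μ) + μt n (s \ measSupport μ) :=
            measure_le_inter_add_diff _ _ _
      _ = μt n (s ∩ measSupport μ) := by rw [h0, add_zero]
    have e3 : μt n (s ∩ measSupport μ) = ∫⁻ x in s ∩ measSupport μ, ENNReal.ofReal (ρn n x) ∂μ := by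
      rw [hμt n, withDensity_apply _ (hs.inter hSmeas)]
    have e4 : ∫⁻ x in s ∩ measSupport μ, ENNReal.ofReal (ρn n x) ∂μ
        ≤ ∫⁻ _ in s ∩ measSupport μ, (1 + δ') ∂μ := by
      apply setLIntegral_mono measurable_const
      intro x hx
      have h2 := (abs_le.mp (hn1 x hx.2)).2
      calc ENNReal.ofReal (ρn n x) ≤ ENNReal.ofReal (1 + δ) :=
            ENNReal.ofReal_le_ofReal (by linarith)
      _ = 1 + δ' := by rw [ENNReal.ofReal_add zero_le_one hδpos.le, ENNReal.ofReal_one, hδeq]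
    have e5 : ∫⁻ _ in s ∩ measSupport μ, (1 + δ') ∂μ ≤ ∫⁻ _ in s, (1 + δ') ∂μ := by
      rw [setLIntegral_const, setLIntegral_const]
      exact mul_le_mul_right (measure_mono Set.inter_subset_left) _
    rw [e1, e2, e3]
    exact e4.trans e5
  -- a.e. lower bound on the density
  have hlow : (fun _ : E => 1 - δ') ≤ᵐ[μ] r n := by
    apply ae_le_of_forall_setLIntegral_le_of_sigmaFinite measurable_const
    intro s hs _
    have e2 : μ s = μ (s ∩ measSupport μ) := by
      refine le_antisymm ?_ (measure_mono Set.inter_subset_left)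
      have h0 : μ (s \ measSupport μ) = 0 :=
        measure_mono_null (fun x hx => hx.2) hScompl
      calc μ s ≤ μ (s ∩ measSupport μ) + μ (s \ measSupport μ) :=
            measure_le_inter_add_diff _ _ _
      _ = μ (s ∩ measSupport μ) := by rw [h0, add_zero]
    have e3 : (1 - δ') * μ (s ∩ measSupport μ)
        ≤ ∫⁻ x in s ∩ measSupport μ, ENNReal.ofReal (ρn n x) ∂μ := by
      calc (1 - δ') * μ (s ∩ measSupport μ)
          = ∫⁻ x, (s ∩ measSupport μ).indicator (fun _ => 1 - δ') x ∂μ := by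
            rw [lintegral_indicator (hs.inter hSmeas), setLIntegral_const]
      _ ≤ ∫⁻ x, (s ∩ measSupport μ).indicator (fun x => ENNReal.ofReal (ρn n x)) x ∂μ := by
            apply lintegral_mono
            intro x
            by_cases hx : x ∈ s ∩ measSupport μ
            · rw [Set.indicator_of_mem hx, Set.indicator_of_mem hx]
              have h1 := (abs_le.mp (hn1 x hx.2)).1
              calc (1:ℝ≥0∞) - δ' = ENNReal.ofReal (1 - δ) := by
                    rw [ENNReal.ofReal_sub _ hδpos.le, ENNReal.ofReal_one, hδeq]
              _ ≤ ENNReal.ofReal (ρn n x) := ENNReal.ofReal_le_ofReal (by linarith)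
            · rw [Set.indicator_of_notMem hx, Set.indicator_of_notMem hx]
      _ = ∫⁻ x in s ∩ measSupport μ, ENNReal.ofReal (ρn n x) ∂μ :=
            lintegral_indicator (hs.inter hSmeas) _
    have e4 : ∫⁻ x in s ∩ measSupport μ, ENNReal.ofReal (ρn n x) ∂μ = μt n (s ∩ measSupport μ) := by
      rw [hμt n, withDensity_apply _ (hs.inter hSmeas)]
    have e6 : μt n s = ∫⁻ x in s, r n x ∂μ := (Measure.setLIntegral_rnDeriv (hac n) s).symm
    calc ∫⁻ _ in s, (1 - δ') ∂μ = (1 - δ') * μ (s ∩ measSupport μ) := by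
          rw [setLIntegral_const, e2]
    _ ≤ μt n (s ∩ measSupport μ) := e4 ▸ e3
    _ ≤ μt n s := measure_mono Set.inter_subset_left
    _ = ∫⁻ x in s, r n x ∂μ := e6
  -- bounds on the defect densities
  have hAbd : A n ≤ᵐ[μ] fun _ => δ' := by
    filter_upwards [hlow] with x hx
    have h1 : 1 - δ' ≤ g n x := le_min hx tsub_le_self
    show 1 - g n x ≤ δ'
    rw [tsub_le_iff_right]
    calc (1:ℝ≥0∞) ≤ (1 - δ') + δ' := le_tsub_add
    _ ≤ g n x + δ' := add_le_add_left h1 _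
    _ = δ' + g n x := add_comm _ _
  have hBbd : B n ≤ᵐ[μ] fun _ => δ' := by
    filter_upwards [hup] with x hx
    show r n x - g n x ≤ δ'
    rw [tsub_le_iff_right]
    rcases le_total (r n x) 1 with h | h
    · calc r n x = g n x := (min_eq_left h).symm
      _ ≤ δ' + g n x := le_add_self
    · have hg1 : g n x = 1 := min_eq_right h
      rw [hg1]
      calc r n x ≤ 1 + δ' := hx
      _ = δ' + 1 := add_comm _ _
  have hmδ : m n ≤ δ' := by
    rw [hmn, hαn, withDensity_apply _ MeasurableSet.univ, Measure.restrict_univ]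
    calc ∫⁻ x, A n x ∂μ ≤ ∫⁻ _, δ' ∂μ := lintegral_mono_ae hAbd
    _ = δ' := by simp
  -- measurability
  have hfm : AEMeasurable f μ := hf.1.aemeasurable
  have hfnm : AEMeasurable (fn n) μ := (hfn n).1.aemeasurable
  have humμ : AEMeasurable (fun x => ENNReal.ofReal (|f x| ^ p)) μ :=
    hφ.comp_aemeasurable hfm
  have hvmμ : AEMeasurable (fun x => ENNReal.ofReal (|fn n x| ^ p)) μ :=
    hφ.comp_aemeasurable hfnm
  have hwmμ : AEMeasurable (fun x => ENNReal.ofReal (|fn n x - f x| ^ p)) μ :=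
    hφ.comp_aemeasurable (hfnm.sub hfm)
  set αβ : Measure (E × E) := (α n).prod (β n) with hαβ
  have hαac : α n ≪ μ := hαn n ▸ withDensity_absolutelyContinuous μ _
  have hβac : β n ≪ μ := hβn n ▸ withDensity_absolutelyContinuous μ _
  have huα : AEMeasurable (fun x => ENNReal.ofReal (|f x| ^ p)) (α n) :=
    humμ.mono_ac hαac
  have hvβ : AEMeasurable (fun x => ENNReal.ofReal (|fn n x| ^ p)) (β n) :=
    hvmμ.mono_ac hβac
  have hmapfst : αβ.map Prod.fst = m n • α n := by
    rw [hαβ, Measure.map_fst_prod, hBuniv n]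
  have hmapsnd : αβ.map Prod.snd = m n • β n := by
    rw [hαβ, Measure.map_snd_prod]
  have hufst : AEMeasurable (fun pr : E × E => ENNReal.ofReal (|f pr.1| ^ p)) αβ := by
    have h1 : AEMeasurable (fun x => ENNReal.ofReal (|f x| ^ p)) (αβ.map Prod.fst) := by
      rw [hmapfst]; exact huα.smul_measure _
    exact h1.comp_measurable measurable_fst
  have hvsnd : AEMeasurable (fun pr : E × E => ENNReal.ofReal (|fn n pr.2| ^ p)) αβ := by
    have h1 : AEMeasurable (fun x => ENNReal.ofReal (|fn n x| ^ p)) (αβ.map Prod.snd) := by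
      rw [hmapsnd]; exact hvβ.smul_measure _
    exact h1.comp_measurable measurable_snd
  -- integral computations on the product
  have hIu : ∫⁻ pr, ENNReal.ofReal (|f pr.1| ^ p) ∂αβ
      = m n * ∫⁻ x, ENNReal.ofReal (|f x| ^ p) ∂(α n) := by
    have h1 : AEMeasurable (fun x => ENNReal.ofReal (|f x| ^ p)) (αβ.map Prod.fst) := by
      rw [hmapfst]; exact huα.smul_measure _
    rw [← lintegral_map' h1 measurable_fst.aemeasurable, hmapfst, lintegral_smul_measure, smul_eq_mul]
  have hIv : ∫⁻ pr, ENNReal.ofReal (|fn n pr.2| ^ p) ∂αβ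
      = m n * ∫⁻ x, ENNReal.ofReal (|fn n x| ^ p) ∂(β n) := by
    have h1 : AEMeasurable (fun x => ENNReal.ofReal (|fn n x| ^ p)) (αβ.map Prod.snd) := by
      rw [hmapsnd]; exact hvβ.smul_measure _
    rw [← lintegral_map' h1 measurable_snd.aemeasurable, hmapsnd, lintegral_smul_measure, smul_eq_mul]
  have hIα : ∫⁻ x, ENNReal.ofReal (|f x| ^ p) ∂(α n) ≤ δ' * F := by
    rw [hαn n, lintegral_withDensity_eq_lintegral_mul₀ (hAmeas n).aemeasurable humμ]
    simp only [Pi.mul_apply]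
    calc ∫⁻ x, A n x * ENNReal.ofReal (|f x| ^ p) ∂μ
        ≤ ∫⁻ x, δ' * ENNReal.ofReal (|f x| ^ p) ∂μ := by
          apply lintegral_mono_ae
          filter_upwards [hAbd] with x hx
          exact mul_le_mul_left hx _
    _ = δ' * F := by rw [lintegral_const_mul' _ _ hδ'top]
  have hFn : ∫⁻ x, ENNReal.ofReal (|fn n x| ^ p) ∂μ ≤ c2 * (Dn n + F) := by
    have hpt : ∀ x, ENNReal.ofReal (|fn n x| ^ p) ≤
        c2 * (ENNReal.ofReal (|fn n x - f x| ^ p) + ENNReal.ofReal (|f x| ^ p)) := by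
      intro x
      have h1 : |fn n x| ^ p ≤ 2 ^ p * (|fn n x - f x| ^ p + |f x| ^ p) := by
        have h2 := rpow_abs_add_le p (fn n x - f x) (f x) hp
        rwa [sub_add_cancel] at h2
      calc ENNReal.ofReal (|fn n x| ^ p)
          ≤ ENNReal.ofReal (2 ^ p * (|fn n x - f x| ^ p + |f x| ^ p)) :=
            ENNReal.ofReal_le_ofReal h1
      _ = c2 * (ENNReal.ofReal (|fn n x - f x| ^ p) + ENNReal.ofReal (|f x| ^ p)) := by
          rw [ENNReal.ofReal_mul (Real.rpow_nonneg (by norm_num) p),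
            ENNReal.ofReal_add (Real.rpow_nonneg (abs_nonneg _) p)
              (Real.rpow_nonneg (abs_nonneg _) p)]
    calc ∫⁻ x, ENNReal.ofReal (|fn n x| ^ p) ∂μ
        ≤ ∫⁻ x, c2 * (ENNReal.ofReal (|fn n x - f x| ^ p) + ENNReal.ofReal (|f x| ^ p)) ∂μ :=
          lintegral_mono hpt
    _ = c2 * ∫⁻ x, (ENNReal.ofReal (|fn n x - f x| ^ p) + ENNReal.ofReal (|f x| ^ p)) ∂μ :=
          lintegral_const_mul' _ _ hc2top
    _ = c2 * (Dn n + F) := by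
          rw [lintegral_add_left' hwmμ _]
  have hIβ : ∫⁻ x, ENNReal.ofReal (|fn n x| ^ p) ∂(β n) ≤ δ' * (c2 * (1 + F)) := by
    rw [hβn n, lintegral_withDensity_eq_lintegral_mul₀ (hBmeas n).aemeasurable hvmμ]
    simp only [Pi.mul_apply]
    calc ∫⁻ x, B n x * ENNReal.ofReal (|fn n x| ^ p) ∂μ
        ≤ ∫⁻ x, δ' * ENNReal.ofReal (|fn n x| ^ p) ∂μ := by
          apply lintegral_mono_ae
          filter_upwards [hBbd] with x hx
          exact mul_le_mul_left hx _
    _ = δ' * ∫⁻ x, ENNReal.ofReal (|fn n x| ^ p) ∂μ := lintegral_const_mul' _ _ hδ'top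
    _ ≤ δ' * (c2 * (Dn n + F)) := mul_le_mul_right hFn _
    _ ≤ δ' * (c2 * (1 + F)) := by
          refine mul_le_mul_right (mul_le_mul_right (add_le_add_left ?_ _) _) _
          exact (hn2.trans (min_le_right _ _))
  -- restriction to the compact set
  have hKcmeas : MeasurableSet Kc := hKc.isClosed.measurableSet
  have hnull : αβ ((Kc ×ˢ Kc)ᶜ) = 0 := by
    have hsub : (Kc ×ˢ Kc)ᶜ ⊆ (Kcᶜ ×ˢ (Set.univ : Set E)) ∪ ((Set.univ : Set E) ×ˢ Kcᶜ) := by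
      intro pr hpr
      simp only [Set.mem_compl_iff, Set.mem_prod, not_and_or] at hpr
      rcases hpr with h | h
      · exact Or.inl ⟨h, trivial⟩
      · exact Or.inr ⟨trivial, h⟩
    apply measure_mono_null hsub
    apply measure_union_null
    · rw [hαβ, Measure.prod_prod, hαac hμKc, zero_mul]
    · rw [hαβ, Measure.prod_prod, hβac hμKc, mul_zero]
  have hmem : ∀ᵐ pr ∂αβ, pr ∈ Kc ×ˢ Kc := by
    have heq : {pr : E × E | ¬ pr ∈ Kc ×ˢ Kc} = (Kc ×ˢ Kc)ᶜ := rfl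
    rw [ae_iff, heq]
    exact hnull
  have hres : αβ.restrict (Kc ×ˢ Kc) = αβ := Measure.restrict_eq_self_of_ae_mem hmem
  -- pointwise cost bound on the compact set
  have hcost : ∀ pr : E × E, pr ∈ Kc ×ˢ Kc →
      ENNReal.ofReal (‖pr.1 - pr.2‖ ^ p + |f pr.1 - fn n pr.2| ^ p) ≤
      C + c2 * (ENNReal.ofReal (|f pr.1| ^ p) + ENNReal.ofReal (|fn n pr.2| ^ p)) := by
    intro pr hpr
    have h1 : ENNReal.ofReal (‖pr.1 - pr.2‖ ^ p) ≤ C := by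
      apply ENNReal.ofReal_le_ofReal
      exact Real.rpow_le_rpow (norm_nonneg _) (hRKc pr.1 hpr.1 pr.2 hpr.2) hp0.le
    have h2 : ENNReal.ofReal (|f pr.1 - fn n pr.2| ^ p) ≤
        c2 * (ENNReal.ofReal (|f pr.1| ^ p) + ENNReal.ofReal (|fn n pr.2| ^ p)) := by
      have h3 : |f pr.1 - fn n pr.2| ^ p ≤ 2 ^ p * (|f pr.1| ^ p + |fn n pr.2| ^ p) := by
        have h4 := rpow_abs_add_le p (f pr.1) (-(fn n pr.2)) hp
        rwa [← sub_eq_add_neg, abs_neg] at h4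
      calc ENNReal.ofReal (|f pr.1 - fn n pr.2| ^ p)
          ≤ ENNReal.ofReal (2 ^ p * (|f pr.1| ^ p + |fn n pr.2| ^ p)) :=
            ENNReal.ofReal_le_ofReal h3
      _ = _ := by
          rw [ENNReal.ofReal_mul (Real.rpow_nonneg (by norm_num) p),
            ENNReal.ofReal_add (Real.rpow_nonneg (abs_nonneg _) p)
              (Real.rpow_nonneg (abs_nonneg _) p)]
    calc ENNReal.ofReal (‖pr.1 - pr.2‖ ^ p + |f pr.1 - fn n pr.2| ^ p)
        ≤ ENNReal.ofReal (‖pr.1 - pr.2‖ ^ p) + ENNReal.ofReal (|f pr.1 - fn n pr.2| ^ p) :=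
          ENNReal.ofReal_add_le
    _ ≤ C + c2 * (ENNReal.ofReal (|f pr.1| ^ p) + ENNReal.ofReal (|fn n pr.2| ^ p)) :=
          add_le_add h1 h2
  -- the product-part estimate
  have hT : ∫⁻ pr, ENNReal.ofReal (‖pr.1 - pr.2‖ ^ p + |f pr.1 - fn n pr.2| ^ p) ∂αβ
      ≤ m n * (δ' * K) := by
    have step1 : ∫⁻ pr, ENNReal.ofReal (‖pr.1 - pr.2‖ ^ p + |f pr.1 - fn n pr.2| ^ p) ∂αβ
        ≤ ∫⁻ pr, (C + c2 * (ENNReal.ofReal (|f pr.1| ^ p) + ENNReal.ofReal (|fn n pr.2| ^ p))) ∂αβ := by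
      conv_lhs => rw [← hres]
      conv_rhs => rw [← hres]
      apply lintegral_mono_ae
      filter_upwards [ae_restrict_mem (hKcmeas.prod hKcmeas)] with pr hpr
      exact hcost pr hpr
    have huniv : αβ Set.univ = m n * m n := by
      rw [hαβ, ← Set.univ_prod_univ, Measure.prod_prod, hBuniv n]
    have step2 : ∫⁻ pr, (C + c2 * (ENNReal.ofReal (|f pr.1| ^ p) + ENNReal.ofReal (|fn n pr.2| ^ p))) ∂αβ
        = C * (m n * m n)
          + c2 * ∫⁻ pr, (ENNReal.ofReal (|f pr.1| ^ p) + ENNReal.ofReal (|fn n pr.2| ^ p)) ∂αβ := by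
      rw [lintegral_add_left measurable_const, lintegral_const, huniv,
        lintegral_const_mul' _ _ hc2top]
    have step3 : ∫⁻ pr, (ENNReal.ofReal (|f pr.1| ^ p) + ENNReal.ofReal (|fn n pr.2| ^ p)) ∂αβ
        = m n * (∫⁻ x, ENNReal.ofReal (|f x| ^ p) ∂(α n))
          + m n * (∫⁻ x, ENNReal.ofReal (|fn n x| ^ p) ∂(β n)) := by
      rw [lintegral_add_left' hufst _, hIu, hIv]
    calc ∫⁻ pr, ENNReal.ofReal (‖pr.1 - pr.2‖ ^ p + |f pr.1 - fn n pr.2| ^ p) ∂αβ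
        ≤ C * (m n * m n)
          + c2 * (m n * (∫⁻ x, ENNReal.ofReal (|f x| ^ p) ∂(α n))
            + m n * (∫⁻ x, ENNReal.ofReal (|fn n x| ^ p) ∂(β n))) := by
          rw [← step3, ← step2]; exact step1
    _ ≤ C * (m n * δ') + c2 * (m n * (δ' * F) + m n * (δ' * (c2 * (1 + F)))) := by
          refine add_le_add (mul_le_mul_right (mul_le_mul_right hmδ _) _)
            (mul_le_mul_right (add_le_add (mul_le_mul_right hIα _)
              (mul_le_mul_right hIβ _)) _)
    _ = m n * (δ' * (C + c2 * F + c2 * c2 * (1 + F))) := by ring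
    _ ≤ m n * (δ' * K) := by
          refine mul_le_mul_right (mul_le_mul_right ?_ _) _
          rw [hK]
          exact self_le_add_right _ _
  -- the diagonal-part estimate
  have hdiagbd : ∫⁻ x, ENNReal.ofReal (‖x - x‖ ^ p + |f x - fn n x| ^ p) ∂(ν n) ≤ Dn n := by
    have hceq : ∀ x : E, ENNReal.ofReal (‖x - x‖ ^ p + |f x - fn n x| ^ p) =
        ENNReal.ofReal (|fn n x - f x| ^ p) := by
      intro x
      rw [sub_self, norm_zero, Real.zero_rpow (ne_of_gt hp0), zero_add, abs_sub_comm]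
    calc ∫⁻ x, ENNReal.ofReal (‖x - x‖ ^ p + |f x - fn n x| ^ p) ∂(ν n)
        = ∫⁻ x, ENNReal.ofReal (|fn n x - f x| ^ p) ∂(ν n) := lintegral_congr hceq
    _ ≤ Dn n := lintegral_mono' (hνle n) le_rfl
  -- put everything together
  have hinvm : (m n)⁻¹ * m n ≤ 1 := by
    rcases eq_or_ne (m n) 0 with h | h
    · rw [h]; simp
    · rw [ENNReal.inv_mul_cancel h (hmne n)]
  have hsplit : ∫⁻ pr, ENNReal.ofReal (‖pr.1 - pr.2‖ ^ p + |f pr.1 - fn n pr.2| ^ p) ∂(π n)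
      = (∫⁻ x, ENNReal.ofReal (‖x - x‖ ^ p + |f x - fn n x| ^ p) ∂(ν n))
        + (m n)⁻¹ * ∫⁻ pr, ENNReal.ofReal (‖pr.1 - pr.2‖ ^ p + |f pr.1 - fn n pr.2| ^ p) ∂αβ := by
    rw [hπn n, lintegral_add_measure, lintegral_smul_measure, hdiagEmb.lintegral_map, smul_eq_mul]
  calc ∫⁻ pr, ENNReal.ofReal (‖pr.1 - pr.2‖ ^ p + |f pr.1 - fn n pr.2| ^ p) ∂(π n)
      = (∫⁻ x, ENNReal.ofReal (‖x - x‖ ^ p + |f x - fn n x| ^ p) ∂(ν n))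
        + (m n)⁻¹ * ∫⁻ pr, ENNReal.ofReal (‖pr.1 - pr.2‖ ^ p + |f pr.1 - fn n pr.2| ^ p) ∂αβ :=
        hsplit
  _ ≤ Dn n + (m n)⁻¹ * (m n * (δ' * K)) := add_le_add hdiagbd (mul_le_mul_right hT _)
  _ = Dn n + ((m n)⁻¹ * m n) * (δ' * K) := by rw [← mul_assoc ((m n)⁻¹) (m n) (δ' * K)]
  _ ≤ min (ε' / 2) 1 + 1 * (δ' * K) := add_le_add hn2 (mul_le_mul_left hinvm _)
  _ ≤ ε' / 2 + ε' / 2 := by rw [one_mul, hδ'K]; exact add_le_add_left (min_le_left _ _) _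
  _ = ε' := ENNReal.add_halves ε'
  _ ≤ ε := min_le_left _ _

/-- If `μ̃_n = ρ_n μ` with `ρ_n → 1` uniformly on the support of the compactly supported
probability measure `μ`, and `f_n → f` in `L^p(μ)`, then `(μ̃_n, f_n) → (μ, f)` in `TL^p`:
there are couplings `π_n` of `μ` and `μ̃_n` with
`∫ |x-y|^p + |f(x) - f_n(y)|^p dπ_n → 0`. -/
theorem tlp_convergence_of_uniform_density (d : ℕ) (p : ℝ) (hp : 1 ≤ p)
    (μ : Measure (EuclideanSpace ℝ (Fin d))) [IsProbabilityMeasure μ]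
    (Kc : Set (EuclideanSpace ℝ (Fin d))) (hKc : IsCompact Kc) (hμKc : μ Kcᶜ = 0)
    (ρn : ℕ → EuclideanSpace ℝ (Fin d) → ℝ) (hρnn : ∀ n x, 0 ≤ ρn n x)
    (μt : ℕ → Measure (EuclideanSpace ℝ (Fin d)))
    (hμt : ∀ n, μt n = μ.withDensity fun x => ENNReal.ofReal (ρn n x))
    (hμtprob : ∀ n, IsProbabilityMeasure (μt n))
    (hunif : TendstoUniformlyOn (fun n x => ρn n x) (fun _ => 1) atTop (measSupport μ))
    (f : EuclideanSpace ℝ (Fin d) → ℝ) (hf : MemLp f (ENNReal.ofReal p) μ)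
    (fn : ℕ → EuclideanSpace ℝ (Fin d) → ℝ) (hfn : ∀ n, MemLp (fn n) (ENNReal.ofReal p) μ)
    (hconv : Tendsto (fun n => ∫⁻ x, ENNReal.ofReal (|fn n x - f x| ^ p) ∂μ) atTop (nhds 0)) :
    ∃ π : ℕ → Measure (EuclideanSpace ℝ (Fin d) × EuclideanSpace ℝ (Fin d)),
      (∀ n, (π n).map Prod.fst = μ) ∧ (∀ n, (π n).map Prod.snd = μt n) ∧
        Tendsto
          (fun n =>
            ∫⁻ pr, ENNReal.ofReal (‖pr.1 - pr.2‖ ^ p + |f pr.1 - fn n pr.2| ^ p) ∂(π n))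
          atTop (nhds 0) :=
  tlp_aux p hp μ Kc hKc hμKc ρn μt hμt hμtprob hunif f hf fn hfn hconv
end

section
/- Let d ≥ 1 and let μ be a Borel probability measure on [0,1)^d with density ρ satisfying 0 < c ≤ ρ(x) ≤ C < ∞. Let (X_i)_{i∈ℕ} be i.i.d. random points with law μ and μ_n := (1/n) Σ_{i=1}^n δ_{X_i}. Let (b_n) and (c_n) be sequences of positive numbers with b_n → ∞, c_n → ∞, c_n²/b_n → ∞, such that for each n the number m_n := n/(b_n log n) is the d-th power of a positive integer, and let {K_j^n : 1 ≤ j ≤ m_n} be the partition of [0,1)^d into m_n congruent half-open cubes of side length δ_n := (b_n log n / n)^{1/d}. Then, almost surely, for all sufficiently large n and all 1 ≤ j ≤ m_n, |μ_n(K_j^n) − μ(K_j^n)| < c_n log n / n. -/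
open MeasureTheory Filter
open scoped ENNReal

/-- The half-open cube of the partition of `[0,1)^d` into `k^d` congruent cubes of side `1/k`,
indexed by `v : Fin d → ℕ` (with `v i < k`). -/
def partitionCube (d k : ℕ) (v : Fin d → ℕ) : Set (EuclideanSpace ℝ (Fin d)) :=
  {x | ∀ i, x i ∈ Set.Ico ((v i : ℝ) / k) (((v i : ℝ) + 1) / k)}

section Aux
open Real ProbabilityTheory

lemma my_exp_le (x : ℝ) (hx : |x| ≤ 1) : Real.exp x ≤ 1 + x + x ^ 2 := by
  have h := Real.exp_bound hx (by norm_num : 0 < 2)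
  have h2 : ∑ i ∈ Finset.range 2, x ^ i / i.factorial = 1 + x := by
    simp [Finset.sum_range_succ]
  rw [h2] at h
  have h3 := (abs_le.1 h).2
  have hfac : ((Nat.succ 2 : ℕ) : ℝ) / ((Nat.factorial 2 : ℕ) * (2:ℕ)) = 3/4 := by
    norm_num [Nat.factorial]
  rw [hfac, sq_abs] at h3
  nlinarith [sq_nonneg x]

variable {Ω : Type*} [MeasurableSpace Ω] {P : Measure Ω} [IsProbabilityMeasure P]

lemma mgf_indicator_sub (A : Set Ω) (hA : MeasurableSet A) (u : ℝ) :
    mgf (fun ω => A.indicator (1 : Ω → ℝ) ω - (P A).toReal) P u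
      = Real.exp (-u * (P A).toReal) * (1 + (P A).toReal * (Real.exp u - 1)) := by
  set p := (P A).toReal
  have key : ∀ ω, Real.exp (u * (A.indicator (1 : Ω → ℝ) ω - p))
      = Real.exp (-u * p) * (1 + (Real.exp u - 1) * A.indicator (1 : Ω → ℝ) ω) := by
    intro ω
    by_cases h : ω ∈ A
    · simp only [Set.indicator_of_mem h, Pi.one_apply]
      rw [mul_sub, mul_one, Real.exp_sub, neg_mul, Real.exp_neg]
      field_simp
      ring
    · simp only [Set.indicator_of_notMem h, mul_zero, add_zero, mul_one]
      rw [mul_sub, mul_zero, zero_sub, neg_mul, Real.exp_neg]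
  unfold mgf
  simp_rw [key]
  rw [integral_const_mul]
  have hint : Integrable (A.indicator (1 : Ω → ℝ)) P := by
    apply Integrable.indicator _ hA
    exact integrable_const 1
  rw [integral_add (integrable_const 1) (hint.const_mul _)]
  rw [integral_const_mul, integral_indicator_one hA]
  simp [p, measureReal_def]
  ring

lemma mgf_indicator_sub_le (A : Set Ω) (hA : MeasurableSet A) (u : ℝ) (hu : |u| ≤ 1) :
    mgf (fun ω => A.indicator (1 : Ω → ℝ) ω - (P A).toReal) P u
      ≤ Real.exp ((P A).toReal * u ^ 2) := by
  rw [mgf_indicator_sub A hA u]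
  set p := (P A).toReal with hp
  have hp0 : 0 ≤ p := ENNReal.toReal_nonneg
  have h1 : 1 + p * (Real.exp u - 1) ≤ Real.exp (p * (Real.exp u - 1)) := by
    have := Real.add_one_le_exp (p * (Real.exp u - 1))
    linarith
  calc Real.exp (-u * p) * (1 + p * (Real.exp u - 1))
      ≤ Real.exp (-u * p) * Real.exp (p * (Real.exp u - 1)) := by
        apply mul_le_mul_of_nonneg_left h1 (Real.exp_nonneg _)
    _ = Real.exp (p * (Real.exp u - 1 - u)) := by rw [← Real.exp_add]; ring_nf
    _ ≤ Real.exp (p * u ^ 2) := by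
        apply Real.exp_le_exp.2
        apply mul_le_mul_of_nonneg_left _ hp0
        have := my_exp_le u hu
        linarith

lemma box_tail {α : Type*} [MeasurableSpace α] (μ : Measure α) [IsProbabilityMeasure μ]
    (K : Set α) (hK : MeasurableSet K)
    (X : ℕ → Ω → α) (hXm : ∀ i, Measurable (X i))
    (hiid : ProbabilityTheory.iIndepFun X P)
    (hlaw : ∀ i, Measure.map (X i) P = μ) (n : ℕ) (t : ℝ) (ht : 0 < t)
    (hp : 0 < (μ K).toReal) :
    P {ω | (n : ℝ) * t ≤
        |∑ i ∈ Finset.range n, (K.indicator (1 : α → ℝ) (X i ω) - (μ K).toReal)|}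
      ≤ ENNReal.ofReal
          (2 * Real.exp (-((n : ℝ) * min (t ^ 2 / (4 * (μ K).toReal)) (t / 2)))) := by
  set p := (μ K).toReal with hpdef
  have hp1 : p ≤ 1 := by
    rw [hpdef]
    exact ENNReal.toReal_le_of_le_ofReal one_pos.le (by simpa using prob_le_one (μ := μ) (s := K))
  set g : α → ℝ := fun x => K.indicator (1 : α → ℝ) x - p with hgdef
  have hg : Measurable g := ((measurable_one (α := ℝ)).indicator hK).sub measurable_const
  have hgb : ∀ x, |g x| ≤ 1 := by
    intro x
    rw [abs_le]
    by_cases h : x ∈ K <;>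
      simp [hgdef, Set.indicator_of_mem, Set.indicator_of_notMem, h] <;> constructor <;>
      linarith
  set S : Ω → ℝ := fun ω => ∑ i ∈ Finset.range n, g (X i ω) with hSdef
  have hSeq : S = ∑ i ∈ Finset.range n, (fun ω => g (X i ω)) := by
    ext ω; simp [hSdef]
  have hSm : Measurable S := by
    apply Finset.measurable_sum
    intro i _
    exact hg.comp (hXm i)
  have hSb : ∀ ω, |S ω| ≤ n := by
    intro ω
    calc |S ω| ≤ ∑ i ∈ Finset.range n, |g (X i ω)| := Finset.abs_sum_le_sum_abs _ _
      _ ≤ ∑ _i ∈ Finset.range n, (1 : ℝ) := Finset.sum_le_sum fun i _ => hgb _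
      _ = n := by simp
  have hint : ∀ u : ℝ, Integrable (fun ω => Real.exp (u * S ω)) P := by
    intro u
    refine Integrable.mono' (integrable_const (Real.exp (|u| * n)))
      ((hSm.const_mul u).exp.aestronglyMeasurable) (ae_of_all _ fun ω => ?_)
    rw [Real.norm_eq_abs, Real.abs_exp]
    apply Real.exp_le_exp.2
    calc u * S ω ≤ |u * S ω| := le_abs_self _
      _ = |u| * |S ω| := abs_mul _ _
      _ ≤ |u| * n := by
          apply mul_le_mul_of_nonneg_left (hSb ω) (abs_nonneg u)
  -- mgf bound for the sum
  have hmgf : ∀ u : ℝ, |u| ≤ 1 → mgf S P u ≤ Real.exp ((n : ℝ) * (p * u ^ 2)) := by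
    intro u hu
    have hindep : ProbabilityTheory.iIndepFun
        (fun i => g ∘ X i) P := hiid.comp (fun _ => g) fun _ => hg
    have hmeas : ∀ i, Measurable (g ∘ X i) := fun i => hg.comp (hXm i)
    have hsum : mgf S P u = ∏ i ∈ Finset.range n, mgf (g ∘ X i) P u := by
      rw [hSeq]
      exact hindep.mgf_sum hmeas (Finset.range n)
    have hone : ∀ i, mgf (g ∘ X i) P u = mgf g μ u := by
      intro i
      unfold mgf
      rw [← hlaw i,
        integral_map (hXm i).aemeasurable ((hg.const_mul u).exp.aestronglyMeasurable)]
      rfl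
    have hgle : mgf g μ u ≤ Real.exp (p * u ^ 2) := mgf_indicator_sub_le K hK u hu
    calc mgf S P u = (mgf g μ u) ^ n := by
          rw [hsum]; simp [hone]
      _ ≤ (Real.exp (p * u ^ 2)) ^ n := pow_le_pow_left₀ mgf_nonneg hgle n
      _ = Real.exp ((n : ℝ) * (p * u ^ 2)) := by rw [← Real.exp_nat_mul]
  -- choice of lambda and exponent inequality
  set lam : ℝ := min 1 (t / (2 * p)) with hlamdef
  have hlam0 : 0 < lam := lt_min one_pos (by positivity)
  have hlam1 : lam ≤ 1 := min_le_left _ _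
  have hlamabs : |lam| ≤ 1 := abs_le.2 ⟨by linarith, hlam1⟩
  set E : ℝ := -((n : ℝ) * min (t ^ 2 / (4 * p)) (t / 2)) with hEdef
  have hexp : -lam * ((n : ℝ) * t) + (n : ℝ) * (p * lam ^ 2) ≤ E := by
    have hn0 : (0 : ℝ) ≤ n := Nat.cast_nonneg n
    rcases le_or_gt t (2 * p) with h | h
    · have hl : lam = t / (2 * p) := min_eq_right (by
        rw [div_le_one (by positivity)]; linarith)
      have hmin : min (t ^ 2 / (4 * p)) (t / 2) ≤ t ^ 2 / (4 * p) := min_le_left _ _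
      rw [hl, hEdef]
      have key : -(t / (2 * p)) * ((n : ℝ) * t) + (n : ℝ) * (p * (t / (2 * p)) ^ 2)
          = -((n : ℝ) * (t ^ 2 / (4 * p))) := by
        field_simp
        ring
      rw [key]
      have := mul_le_mul_of_nonneg_left hmin hn0
      linarith
    · have hl : lam = 1 := min_eq_left (by
        rw [le_div_iff₀ (by positivity)]; linarith)
      have hmin : min (t ^ 2 / (4 * p)) (t / 2) ≤ t / 2 := min_le_right _ _
      rw [hl, hEdef]
      have := mul_le_mul_of_nonneg_left hmin hn0
      nlinarith
  -- upper tail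
  have hup : P {ω | (n : ℝ) * t ≤ S ω} ≤ ENNReal.ofReal (Real.exp E) := by
    rw [ENNReal.le_ofReal_iff_toReal_le (measure_ne_top _ _) (Real.exp_nonneg _)]
    calc (P {ω | (n : ℝ) * t ≤ S ω}).toReal
        ≤ Real.exp (-lam * ((n : ℝ) * t)) * mgf S P lam :=
          measure_ge_le_exp_mul_mgf ((n : ℝ) * t) hlam0.le (hint lam)
      _ ≤ Real.exp (-lam * ((n : ℝ) * t)) * Real.exp ((n : ℝ) * (p * lam ^ 2)) := by
          apply mul_le_mul_of_nonneg_left (hmgf lam hlamabs) (Real.exp_nonneg _)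
      _ = Real.exp (-lam * ((n : ℝ) * t) + (n : ℝ) * (p * lam ^ 2)) := (Real.exp_add _ _).symm
      _ ≤ Real.exp E := Real.exp_le_exp.2 hexp
  -- lower tail
  have hlow : P {ω | (n : ℝ) * t ≤ -S ω} ≤ ENNReal.ofReal (Real.exp E) := by
    rw [ENNReal.le_ofReal_iff_toReal_le (measure_ne_top _ _) (Real.exp_nonneg _)]
    have hintneg : Integrable (fun ω => Real.exp (lam * (-S) ω)) P := by
      have := hint (-lam)
      simpa [neg_mul, mul_neg] using this
    have hmgfneg : mgf (-S) P lam ≤ Real.exp ((n : ℝ) * (p * lam ^ 2)) := by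
      rw [mgf_neg]
      have : |(-lam)| ≤ 1 := by rwa [abs_neg]
      have h2 := hmgf (-lam) this
      calc mgf S P (-lam) ≤ Real.exp ((n : ℝ) * (p * (-lam) ^ 2)) := h2
        _ = Real.exp ((n : ℝ) * (p * lam ^ 2)) := by ring_nf
    calc (P {ω | (n : ℝ) * t ≤ -S ω}).toReal
        = (P {ω | (n : ℝ) * t ≤ (-S) ω}).toReal := by rfl
      _ ≤ Real.exp (-lam * ((n : ℝ) * t)) * mgf (-S) P lam :=
          measure_ge_le_exp_mul_mgf ((n : ℝ) * t) hlam0.le hintneg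
      _ ≤ Real.exp (-lam * ((n : ℝ) * t)) * Real.exp ((n : ℝ) * (p * lam ^ 2)) := by
          apply mul_le_mul_of_nonneg_left hmgfneg (Real.exp_nonneg _)
      _ = Real.exp (-lam * ((n : ℝ) * t) + (n : ℝ) * (p * lam ^ 2)) := (Real.exp_add _ _).symm
      _ ≤ Real.exp E := Real.exp_le_exp.2 hexp
  have hsubset : {ω | (n : ℝ) * t ≤ |S ω|}
      ⊆ {ω | (n : ℝ) * t ≤ S ω} ∪ {ω | (n : ℝ) * t ≤ -S ω} := by
    intro ω hω
    rcases le_abs.1 (Set.mem_setOf_eq ▸ hω) with h | h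
    · exact Or.inl h
    · exact Or.inr h
  calc P {ω | (n : ℝ) * t ≤
        |∑ i ∈ Finset.range n, (K.indicator (1 : α → ℝ) (X i ω) - p)|}
      = P {ω | (n : ℝ) * t ≤ |S ω|} := by rfl
    _ ≤ P ({ω | (n : ℝ) * t ≤ S ω} ∪ {ω | (n : ℝ) * t ≤ -S ω}) := measure_mono hsubset
    _ ≤ P {ω | (n : ℝ) * t ≤ S ω} + P {ω | (n : ℝ) * t ≤ -S ω} := measure_union_le _ _
    _ ≤ ENNReal.ofReal (Real.exp E) + ENNReal.ofReal (Real.exp E) := add_le_add hup hlow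
    _ = ENNReal.ofReal (2 * Real.exp E) := by
        rw [← ENNReal.ofReal_add (Real.exp_nonneg _) (Real.exp_nonneg _)]
        ring_nf
    _ = ENNReal.ofReal (2 * Real.exp (-((n : ℝ) * min (t ^ 2 / (4 * p)) (t / 2)))) := rfl
-- w2


lemma partitionCube_measurable (d k : ℕ) (v : Fin d → ℕ) :
    MeasurableSet (partitionCube d k v) := by
  have : partitionCube d k v = ⋂ i, (fun x : EuclideanSpace ℝ (Fin d) => x i) ⁻¹'
      Set.Ico ((v i : ℝ) / k) (((v i : ℝ) + 1) / k) := by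
    ext x; simp [partitionCube]
  rw [this]
  exact MeasurableSet.iInter fun i =>
    ((measurable_pi_apply i).comp (WithLp.measurable_ofLp 2 _)) measurableSet_Ico

lemma partitionCube_volume (d k : ℕ) (hk : 0 < k) (v : Fin d → ℕ) :
    volume (partitionCube d k v) = ENNReal.ofReal (((1 : ℝ) / k) ^ d) := by
  have he : partitionCube d k v =
      (MeasurableEquiv.toLp 2 (Fin d → ℝ)).symm ⁻¹'
        (Set.univ.pi fun i => Set.Ico ((v i : ℝ) / k) (((v i : ℝ) + 1) / k)) := by
    ext x; simp [partitionCube, MeasurableEquiv.toLp_symm_apply, Set.mem_pi]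
  rw [he, (EuclideanSpace.volume_preserving_symm_measurableEquiv_toLp (Fin d)).measure_preimage
    (MeasurableSet.univ_pi fun i => measurableSet_Ico).nullMeasurableSet,
    volume_pi_pi]
  have : ∀ i : Fin d, volume (Set.Ico ((v i : ℝ) / k) (((v i : ℝ) + 1) / k))
      = ENNReal.ofReal ((1 : ℝ) / k) := by
    intro i
    rw [Real.volume_Ico]
    congr 1
    field_simp
    ring
  simp only [this, Finset.prod_const, Finset.card_univ, Fintype.card_fin]
  rw [← ENNReal.ofReal_pow (by positivity)]

lemma cube_subset (d k : ℕ) (hk : 0 < k) (v : Fin d → ℕ) (hv : ∀ i, v i < k) :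
    partitionCube d k v ⊆ {x : EuclideanSpace ℝ (Fin d) | ∀ i, x i ∈ Set.Ico (0 : ℝ) 1} := by
  intro x hx i
  have h := hx i
  have hk' : (0 : ℝ) < k := by exact_mod_cast hk
  constructor
  · exact le_trans (by positivity) h.1
  · apply lt_of_lt_of_le h.2
    rw [div_le_one hk']
    have : (v i : ℝ) + 1 ≤ k := by exact_mod_cast hv i
    linarith

lemma cube_measure_bounds (d k : ℕ) (hk : 0 < k) (v : Fin d → ℕ) (hv : ∀ i, v i < k)
    (c C : ℝ) (hc0 : 0 ≤ c) (hC0 : 0 ≤ C)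
    (ρ : EuclideanSpace ℝ (Fin d) → ℝ) (hρm : Measurable ρ)
    (hρb : ∀ x : EuclideanSpace ℝ (Fin d),
      (∀ i, x i ∈ Set.Ico (0 : ℝ) 1) → c ≤ ρ x ∧ ρ x ≤ C)
    (μ : Measure (EuclideanSpace ℝ (Fin d)))
    (hμ : μ = (volume.restrict {x : EuclideanSpace ℝ (Fin d) |
        ∀ i, x i ∈ Set.Ico (0 : ℝ) 1}).withDensity fun x => ENNReal.ofReal (ρ x)) :
    ENNReal.ofReal (c * ((1 : ℝ) / k) ^ d) ≤ μ (partitionCube d k v) ∧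
      μ (partitionCube d k v) ≤ ENNReal.ofReal (C * ((1 : ℝ) / k) ^ d) := by
  set U := {x : EuclideanSpace ℝ (Fin d) | ∀ i, x i ∈ Set.Ico (0 : ℝ) 1}
  set K := partitionCube d k v
  have hKm : MeasurableSet K := partitionCube_measurable d k v
  have hKU : K ⊆ U := cube_subset d k v hv (hk := hk)
  have happ : μ K = ∫⁻ x in K, ENNReal.ofReal (ρ x) ∂volume := by
    rw [hμ, withDensity_apply _ hKm, Measure.restrict_restrict hKm,
      Set.inter_eq_self_of_subset_left hKU]
  have hvol : volume K = ENNReal.ofReal (((1 : ℝ) / k) ^ d) :=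
    partitionCube_volume d k hk v
  constructor
  · rw [happ]
    calc ENNReal.ofReal (c * ((1 : ℝ) / k) ^ d)
        = ENNReal.ofReal c * volume K := by
          rw [hvol, ← ENNReal.ofReal_mul hc0]
      _ = ∫⁻ _x in K, ENNReal.ofReal c ∂volume := (setLIntegral_const K _).symm
      _ ≤ ∫⁻ x in K, ENNReal.ofReal (ρ x) ∂volume := by
          apply setLIntegral_mono (hρm.ennreal_ofReal)
          intro x hx
          exact ENNReal.ofReal_le_ofReal (hρb x (hKU hx)).1
  · rw [happ]
    calc ∫⁻ x in K, ENNReal.ofReal (ρ x) ∂volume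
        ≤ ∫⁻ _x in K, ENNReal.ofReal C ∂volume := by
          apply setLIntegral_mono measurable_const
          intro x hx
          exact ENNReal.ofReal_le_ofReal (hρb x (hKU hx)).2
      _ = ENNReal.ofReal C * volume K := setLIntegral_const K _
      _ = ENNReal.ofReal (C * ((1 : ℝ) / k) ^ d) := by
          rw [hvol, ← ENNReal.ofReal_mul hC0]

lemma empirical_toReal {α : Type*} [MeasurableSpace α] (K : Set α) (hK : MeasurableSet K)
    (n : ℕ) (y : ℕ → α) :
    (((n : ℝ≥0∞)⁻¹ • ∑ i ∈ Finset.range n, Measure.dirac (y i)) K).toReal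
      = (∑ i ∈ Finset.range n, K.indicator (1 : α → ℝ) (y i)) / n := by
  rw [Measure.smul_apply, Measure.finset_sum_apply]
  have hd : ∀ i, Measure.dirac (y i) K = K.indicator (1 : α → ℝ≥0∞) (y i) := fun i =>
    Measure.dirac_apply' _ hK
  simp_rw [hd]
  rw [smul_eq_mul, ENNReal.toReal_mul, ENNReal.toReal_inv, ENNReal.toReal_natCast,
    ENNReal.toReal_sum (fun i _ => ?_)]
  · rw [inv_mul_eq_div]
    congr 1
    apply Finset.sum_congr rfl
    intro i _
    by_cases h : y i ∈ K <;>
      simp [Set.indicator_of_mem, Set.indicator_of_notMem, h]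
  · by_cases h : y i ∈ K <;>
      simp [Set.indicator_of_mem, Set.indicator_of_notMem, h]
lemma box_prob_le {Ω : Type*} [MeasurableSpace Ω] (P : Measure Ω) [IsProbabilityMeasure P]
    (d k' n : ℕ) (c C : ℝ) (hc : 0 < c) (hC : 0 < C)
    (ρ : EuclideanSpace ℝ (Fin d) → ℝ) (hρm : Measurable ρ)
    (hρb : ∀ x : EuclideanSpace ℝ (Fin d),
      (∀ i, x i ∈ Set.Ico (0 : ℝ) 1) → c ≤ ρ x ∧ ρ x ≤ C)
    (μ : Measure (EuclideanSpace ℝ (Fin d)))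
    (hμ : μ = (volume.restrict {x : EuclideanSpace ℝ (Fin d) |
        ∀ i, x i ∈ Set.Ico (0 : ℝ) 1}).withDensity fun x => ENNReal.ofReal (ρ x))
    [IsProbabilityMeasure μ]
    (X : ℕ → Ω → EuclideanSpace ℝ (Fin d)) (hXm : ∀ i, Measurable (X i))
    (hiid : ProbabilityTheory.iIndepFun X P)
    (hlaw : ∀ i, Measure.map (X i) P = μ)
    (bn cn : ℝ) (hbn : 0 < bn) (hcn : 0 < cn) (hkn : 0 < k')
    (h2n : 2 ≤ n) (hb1 : 1 ≤ bn) (hlog1 : 1 ≤ Real.log n)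
    (ha1 : 12 * C ≤ cn ^ 2 / bn) (ha2 : 6 ≤ cn)
    (hkd' : (k' : ℝ) ^ d = n / (bn * Real.log n))
    (v : Fin d → ℕ) (hv : ∀ i, v i < k') :
    P {ω | cn * Real.log n / n ≤
        |(((n : ℝ≥0∞)⁻¹ • ∑ i ∈ Finset.range n, Measure.dirac (X i ω))
            (partitionCube d k' v)).toReal - (μ (partitionCube d k' v)).toReal|}
      ≤ ENNReal.ofReal (2 / (n : ℝ) ^ 3) := by
  have hn0 : (0 : ℝ) < n := by exact_mod_cast (by omega : 0 < n)
  have hknR : (0 : ℝ) < k' := by exact_mod_cast hkn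
  have hL0 : (0 : ℝ) < Real.log n := lt_of_lt_of_le one_pos hlog1
  have hbL : 0 < bn * Real.log n := mul_pos hbn hL0
  set T : ℝ := cn * Real.log n / n with hTdef
  have hT0 : 0 < T := div_pos (mul_pos hcn hL0) hn0
  set K := partitionCube d k' v with hKdef
  have hKm : MeasurableSet K := partitionCube_measurable d k' v
  obtain ⟨hlo, hhi⟩ := cube_measure_bounds d k' hkn v hv c C hc.le hC.le ρ hρm hρb μ hμ
  set p := (μ K).toReal with hpdef
  set q := ((1 : ℝ) / k') ^ d with hqdef
  have hq0 : 0 < q := by positivity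
  have hqv : q = bn * Real.log n / n := by
    rw [hqdef, one_div, inv_pow, hkd', ← one_div, one_div_div]
  have hpge : c * q ≤ p := by
    have := ENNReal.toReal_mono (measure_ne_top μ K) hlo
    rwa [ENNReal.toReal_ofReal (mul_nonneg hc.le hq0.le)] at this
  have hple : p ≤ C * q := by
    have := ENNReal.toReal_mono ENNReal.ofReal_ne_top hhi
    rwa [ENNReal.toReal_ofReal (mul_nonneg hC.le hq0.le)] at this
  have hp0 : 0 < p := lt_of_lt_of_le (mul_pos hc hq0) hpge
  have hset : {ω | T ≤
        |(((n : ℝ≥0∞)⁻¹ • ∑ i ∈ Finset.range n, Measure.dirac (X i ω)) K).toReal - p|}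
      = {ω | (n : ℝ) * T ≤
        |∑ i ∈ Finset.range n, (K.indicator (1 : EuclideanSpace ℝ (Fin d) → ℝ) (X i ω) - p)|} := by
    ext ω
    simp only [Set.mem_setOf_eq]
    rw [empirical_toReal K hKm n (fun i => X i ω)]
    have hrw : (∑ i ∈ Finset.range n, K.indicator (1 : EuclideanSpace ℝ (Fin d) → ℝ) (X i ω)) / n - p
        = (∑ i ∈ Finset.range n, (K.indicator (1 : EuclideanSpace ℝ (Fin d) → ℝ) (X i ω) - p)) / n := by
      rw [Finset.sum_sub_distrib, Finset.sum_const, Finset.card_range, nsmul_eq_mul, sub_div]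
      congr 1
      field_simp
    rw [hrw, abs_div, abs_of_pos hn0, le_div_iff₀ hn0, mul_comm]
  rw [hset]
  have htail := box_tail (P := P) μ K hKm X hXm hiid hlaw n T hT0 hp0
  refine le_trans htail (ENNReal.ofReal_le_ofReal ?_)
  have hmin : 3 * Real.log n ≤ (n : ℝ) * min (T ^ 2 / (4 * p)) (T / 2) := by
    have h1 : 3 * Real.log n ≤ (n : ℝ) * (T ^ 2 / (4 * p)) := by
      have hstep : T ^ 2 / (4 * (C * q)) ≤ T ^ 2 / (4 * p) := by
        apply div_le_div_of_nonneg_left (sq_nonneg _) (by positivity)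
        linarith
      have hval : (n : ℝ) * (T ^ 2 / (4 * (C * q))) = cn ^ 2 / bn / (4 * C) * Real.log n := by
        rw [hTdef, hqv]
        field_simp
      have h3le : (3 : ℝ) ≤ cn ^ 2 / bn / (4 * C) := by
        rw [le_div_iff₀ (by positivity)]
        linarith
      calc 3 * Real.log n ≤ cn ^ 2 / bn / (4 * C) * Real.log n :=
            mul_le_mul_of_nonneg_right h3le hL0.le
        _ = (n : ℝ) * (T ^ 2 / (4 * (C * q))) := hval.symm
        _ ≤ (n : ℝ) * (T ^ 2 / (4 * p)) := mul_le_mul_of_nonneg_left hstep hn0.le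
    have h2 : 3 * Real.log n ≤ (n : ℝ) * (T / 2) := by
      have hval : (n : ℝ) * (T / 2) = cn * Real.log n / 2 := by
        rw [hTdef]; field_simp
      rw [hval]
      nlinarith [hL0.le]
    rcases le_total (T ^ 2 / (4 * p)) (T / 2) with hcase | hcase
    · rw [min_eq_left hcase]; exact h1
    · rw [min_eq_right hcase]; exact h2
  have hexp2 : Real.exp (-((n : ℝ) * min (T ^ 2 / (4 * p)) (T / 2))) ≤ ((n : ℝ) ^ 3)⁻¹ := by
    have hstep : Real.exp (-((n : ℝ) * min (T ^ 2 / (4 * p)) (T / 2)))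
        ≤ Real.exp (-(3 * Real.log n)) := Real.exp_le_exp.2 (by linarith)
    refine le_trans hstep ?_
    rw [Real.exp_neg]
    rw [show (3 : ℝ) * Real.log n = Real.log ((n : ℝ) ^ 3) by rw [Real.log_pow]; norm_num]
    rw [Real.exp_log (by positivity)]
  have hrw2 : (2 : ℝ) / (n : ℝ) ^ 3 = 2 * ((n : ℝ) ^ 3)⁻¹ := by rw [div_eq_mul_inv]
  rw [hrw2]
  nlinarith [hexp2]
lemma bad_prob_le {Ω : Type*} [MeasurableSpace Ω] (P : Measure Ω) [IsProbabilityMeasure P]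
    (d k' n : ℕ) (c C : ℝ) (hc : 0 < c) (hC : 0 < C)
    (ρ : EuclideanSpace ℝ (Fin d) → ℝ) (hρm : Measurable ρ)
    (hρb : ∀ x : EuclideanSpace ℝ (Fin d),
      (∀ i, x i ∈ Set.Ico (0 : ℝ) 1) → c ≤ ρ x ∧ ρ x ≤ C)
    (μ : Measure (EuclideanSpace ℝ (Fin d)))
    (hμ : μ = (volume.restrict {x : EuclideanSpace ℝ (Fin d) |
        ∀ i, x i ∈ Set.Ico (0 : ℝ) 1}).withDensity fun x => ENNReal.ofReal (ρ x))
    [IsProbabilityMeasure μ]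
    (X : ℕ → Ω → EuclideanSpace ℝ (Fin d)) (hXm : ∀ i, Measurable (X i))
    (hiid : ProbabilityTheory.iIndepFun X P)
    (hlaw : ∀ i, Measure.map (X i) P = μ)
    (bn cn : ℝ) (hbn : 0 < bn) (hcn : 0 < cn) (hkn : 0 < k')
    (h2n : 2 ≤ n) (hb1 : 1 ≤ bn) (hlog1 : 1 ≤ Real.log n)
    (ha1 : 12 * C ≤ cn ^ 2 / bn) (ha2 : 6 ≤ cn)
    (hkd' : (k' : ℝ) ^ d = n / (bn * Real.log n)) :
    P {ω | ∃ v : Fin d → ℕ, (∀ i, v i < k') ∧ cn * Real.log n / n ≤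
        |(((n : ℝ≥0∞)⁻¹ • ∑ i ∈ Finset.range n, Measure.dirac (X i ω))
            (partitionCube d k' v)).toReal - (μ (partitionCube d k' v)).toReal|}
      ≤ ENNReal.ofReal (2 / (n : ℝ) ^ 2) := by
  classical
  have hn0 : (0 : ℝ) < n := by exact_mod_cast (by omega : 0 < n)
  have hL0 : (0 : ℝ) < Real.log n := lt_of_lt_of_le one_pos hlog1
  set A : (Fin d → ℕ) → Set Ω := fun v => {ω | cn * Real.log n / n ≤
      |(((n : ℝ≥0∞)⁻¹ • ∑ i ∈ Finset.range n, Measure.dirac (X i ω))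
          (partitionCube d k' v)).toReal - (μ (partitionCube d k' v)).toReal|} with hA
  set s : Finset (Fin d → ℕ) := Fintype.piFinset (fun _ : Fin d => Finset.range k') with hs
  have hsub : {ω | ∃ v : Fin d → ℕ, (∀ i, v i < k') ∧ cn * Real.log n / n ≤
      |(((n : ℝ≥0∞)⁻¹ • ∑ i ∈ Finset.range n, Measure.dirac (X i ω))
          (partitionCube d k' v)).toReal - (μ (partitionCube d k' v)).toReal|}
      ⊆ ⋃ v ∈ s, A v := by
    rintro ω ⟨v, hv, hle⟩
    have hvm : v ∈ s := by
      rw [hs, Fintype.mem_piFinset]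
      intro i
      exact Finset.mem_range.2 (hv i)
    exact Set.mem_biUnion hvm hle
  have hcard : s.card = k' ^ d := by
    rw [hs, Fintype.card_piFinset]
    simp
  calc P _ ≤ P (⋃ v ∈ s, A v) := measure_mono hsub
    _ ≤ ∑ v ∈ s, P (A v) := measure_biUnion_finset_le _ _
    _ ≤ ∑ _v ∈ s, ENNReal.ofReal (2 / (n : ℝ) ^ 3) := by
        apply Finset.sum_le_sum
        intro v hvmem
        have hv : ∀ i, v i < k' := by
          simpa [hs, Fintype.mem_piFinset, Finset.mem_range] using hvmem
        exact box_prob_le P d k' n c C hc hC ρ hρm hρb μ hμ X hXm hiid hlaw bn cn hbn hcn hkn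
          h2n hb1 hlog1 ha1 ha2 hkd' v hv
    _ = (k' ^ d : ℕ) * ENNReal.ofReal (2 / (n : ℝ) ^ 3) := by
        rw [Finset.sum_const, hcard, nsmul_eq_mul]
    _ = ENNReal.ofReal ((k' : ℝ) ^ d * (2 / (n : ℝ) ^ 3)) := by
        rw [ENNReal.ofReal_mul (by positivity)]
        congr 1
        rw [← ENNReal.ofReal_natCast (k' ^ d)]
        congr 1
        push_cast
        ring
    _ ≤ ENNReal.ofReal (2 / (n : ℝ) ^ 2) := by
        apply ENNReal.ofReal_le_ofReal
        have hbL1 : 1 ≤ bn * Real.log n := by nlinarith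
        have hkdn : (k' : ℝ) ^ d ≤ n := by
          rw [hkd']
          exact div_le_self hn0.le hbL1
        have h1 : (k' : ℝ) ^ d * (2 / (n : ℝ) ^ 3) ≤ (n : ℝ) * (2 / (n : ℝ) ^ 3) :=
          mul_le_mul_of_nonneg_right hkdn (by positivity)
        have h2 : (n : ℝ) * (2 / (n : ℝ) ^ 3) = 2 / (n : ℝ) ^ 2 := by
          field_simp
        linarith

end Aux

open Real ProbabilityTheory in
/-- Concentration on boxes: almost surely, for all sufficiently large `n`, the empirical measure
of every cube `K_j^n` in the dyadic-type partition of `[0,1)^d` into `m_n = n/(b_n log n)` cubes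
of side `δ_n = (b_n log n/n)^{1/d}` deviates from its mean by less than `c_n log n / n`. -/
theorem empirical_concentration_on_boxes (d : ℕ) (hd : 1 ≤ d)
    {Ω' : Type*} [MeasurableSpace Ω'] (P : Measure Ω') [IsProbabilityMeasure P]
    (c C : ℝ) (hc : 0 < c)
    (ρ : EuclideanSpace ℝ (Fin d) → ℝ) (hρm : Measurable ρ)
    (hρb : ∀ x : EuclideanSpace ℝ (Fin d),
      (∀ i, x i ∈ Set.Ico (0 : ℝ) 1) → c ≤ ρ x ∧ ρ x ≤ C)
    (μ : Measure (EuclideanSpace ℝ (Fin d)))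
    (hμ : μ = (volume.restrict {x : EuclideanSpace ℝ (Fin d) |
        ∀ i, x i ∈ Set.Ico (0 : ℝ) 1}).withDensity fun x => ENNReal.ofReal (ρ x))
    (hμprob : IsProbabilityMeasure μ)
    (X : ℕ → Ω' → EuclideanSpace ℝ (Fin d)) (hXm : ∀ i, Measurable (X i))
    (hiid : ProbabilityTheory.iIndepFun X P)
    (hlaw : ∀ i, Measure.map (X i) P = μ)
    (b cseq : ℕ → ℝ) (hb : ∀ n, 0 < b n) (hcseq : ∀ n, 0 < cseq n)
    (hbtop : Tendsto b atTop atTop) (hctop : Tendsto cseq atTop atTop)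
    (hc2b : Tendsto (fun n => cseq n ^ 2 / b n) atTop atTop)
    (k : ℕ → ℕ) (hk : ∀ n, 0 < k n)
    (hkd : ∀ n : ℕ, 2 ≤ n → ((k n : ℝ)) ^ d = (n : ℝ) / (b n * Real.log n)) :
    ∀ᵐ ω ∂P, ∀ᶠ n : ℕ in atTop, ∀ v : Fin d → ℕ, (∀ i, v i < k n) →
      |(((n : ℝ≥0∞)⁻¹ • ∑ i ∈ Finset.range n, Measure.dirac (X i ω))
            (partitionCube d (k n) v)).toReal -
          (μ (partitionCube d (k n) v)).toReal| < cseq n * Real.log n / n := by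
  classical
  have hμp : IsProbabilityMeasure μ := hμprob
  have h0mem : ∀ i : Fin d, (0 : EuclideanSpace ℝ (Fin d)) i ∈ Set.Ico (0 : ℝ) 1 := by
    intro i
    simp
  have hC : 0 < C := lt_of_lt_of_le hc ((hρb 0 h0mem).1.trans (hρb 0 h0mem).2)
  have hev : ∀ᶠ n : ℕ in atTop, 2 ≤ n ∧ 1 ≤ b n ∧ 1 ≤ Real.log n ∧
      12 * C ≤ cseq n ^ 2 / b n ∧ 6 ≤ cseq n := by
    filter_upwards [eventually_ge_atTop 2, hbtop.eventually_ge_atTop 1,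
      (Real.tendsto_log_atTop.comp tendsto_natCast_atTop_atTop).eventually_ge_atTop 1,
      hc2b.eventually_ge_atTop (12 * C), hctop.eventually_ge_atTop 6] with n h1 h2 h3 h4 h5
    exact ⟨h1, h2, h3, h4, h5⟩
  obtain ⟨N0, hN0⟩ := eventually_atTop.1 hev
  set N := max N0 1 with hNdef
  have hN1 : 1 ≤ N := le_max_right _ _
  set bad : ℕ → Set Ω' := fun n => {ω | ∃ v : Fin d → ℕ, (∀ i, v i < k n) ∧
      cseq n * Real.log n / n ≤
        |(((n : ℝ≥0∞)⁻¹ • ∑ i ∈ Finset.range n, Measure.dirac (X i ω))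
            (partitionCube d (k n) v)).toReal -
          (μ (partitionCube d (k n) v)).toReal|} with hbaddef
  have hbadle : ∀ n, N ≤ n → P (bad n) ≤ ENNReal.ofReal (2 / (n : ℝ) ^ 2) := by
    intro n hn
    obtain ⟨h2n, hb1, hlog1, ha1, ha2⟩ := hN0 n (le_trans (le_max_left _ _) hn)
    exact bad_prob_le P d (k n) n c C hc hC ρ hρm hρb μ hμ X hXm hiid hlaw (b n) (cseq n)
      (hb n) (hcseq n) (hk n) h2n hb1 hlog1 ha1 ha2 (hkd n h2n)
  have hterm : ∀ m : ℕ, P (bad (m + N)) ≤ ENNReal.ofReal (2 / ((m : ℝ) + 1) ^ 2) := by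
    intro m
    refine le_trans (hbadle (m + N) (by omega)) (ENNReal.ofReal_le_ofReal ?_)
    have h1 : ((m : ℝ) + 1) ≤ ((m + N : ℕ) : ℝ) := by
      push_cast
      have : (1 : ℝ) ≤ N := by exact_mod_cast hN1
      linarith
    apply div_le_div_of_nonneg_left (by norm_num) (by positivity)
    calc ((m : ℝ) + 1) ^ 2 ≤ ((m + N : ℕ) : ℝ) ^ 2 := by
          apply pow_le_pow_left₀ (by positivity) h1
      _ = ((m + N : ℕ) : ℝ) ^ 2 := rfl
  have hsummable : Summable (fun m : ℕ => 2 / ((m : ℝ) + 1) ^ 2) := by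
    have h1 : Summable (fun m : ℕ => 1 / (m : ℝ) ^ 2) :=
      summable_one_div_nat_pow.2 (by norm_num)
    have h2 := ((summable_nat_add_iff 1).2 h1).mul_left 2
    simpa [mul_one_div, div_eq_mul_inv] using h2
  have hne : (∑' m : ℕ, P (bad (m + N))) ≠ ⊤ := by
    refine ne_top_of_le_ne_top ?_ (ENNReal.tsum_le_tsum hterm)
    rw [← ENNReal.ofReal_tsum_of_nonneg (fun m => by positivity) hsummable]
    exact ENNReal.ofReal_ne_top
  have hae := MeasureTheory.ae_eventually_notMem (μ := P) (s := fun m => bad (m + N)) hne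
  filter_upwards [hae] with ω hω
  obtain ⟨M, hM⟩ := eventually_atTop.1 hω
  rw [eventually_atTop]
  refine ⟨M + N, fun n hn => ?_⟩
  have hnot : ω ∉ bad n := by
    have h := hM (n - N) (by omega)
    rwa [Nat.sub_add_cancel (by omega)] at h
  intro v hv
  by_contra hcon
  push_neg at hcon
  exact hnot ⟨v, hv, hcon⟩
end
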